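/- arXiv:2208.14079 — 15 statements merged into one kernel-verified Lean document; each statement's English description precedes it below -/
import Mathlib

section
/- Let X be a topological space such that every open relation Φ ⊆ X × ℝ whose fibers Φ(x) = {y : (x,y) ∈ Φ} are nonempty and convex admits a continuous selection f : X → ℝ (i.e., (x, f x) ∈ Φ for all x). Then X is a normal space. -/
/-- If every open relation `Φ ⊆ X × ℝ` with nonempty convex fibers admits a
continuous selection, then `X` is normal. -/
theorem stmt_0 {X : Type*} [TopologicalSpace X] [T2Space X]
    (h : ∀ Φ : Set (X × ℝ), IsOpen Φ →
      (∀ x : X, {y : ℝ | (x, y) ∈ Φ}.Nonempty ∧ Convex ℝ {y : ℝ | (x, y) ∈ Φ}) →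
      ∃ f : X → ℝ, Continuous f ∧ ∀ x : X, (x, f x) ∈ Φ) :
    NormalSpace X := by
  classical
  constructor
  intro A B hA hB hAB
  set Φ : Set (X × ℝ) :=
    ((Aᶜ ×ˢ Set.univ) ∪ (Set.univ ×ˢ Set.Iio 0)) ∩
    ((Bᶜ ×ˢ Set.univ) ∪ (Set.univ ×ˢ Set.Ioi 1)) with hΦ
  have hopen : IsOpen Φ := by
    apply IsOpen.inter <;> apply IsOpen.union
    · exact hA.isOpen_compl.prod isOpen_univ
    · exact isOpen_univ.prod isOpen_Iio
    · exact hB.isOpen_compl.prod isOpen_univ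
    · exact isOpen_univ.prod isOpen_Ioi
  have hfib : ∀ x : X, {y : ℝ | (x, y) ∈ Φ} =
      (if x ∈ A then Set.Iio 0 else Set.univ) ∩
      (if x ∈ B then Set.Ioi 1 else Set.univ) := by
    intro x
    ext y
    by_cases hxA : x ∈ A <;> by_cases hxB : x ∈ B <;>
      simp [hΦ, hxA, hxB]
  have hprops : ∀ x : X, {y : ℝ | (x, y) ∈ Φ}.Nonempty ∧ Convex ℝ {y : ℝ | (x, y) ∈ Φ} := by
    intro x
    rw [hfib x]
    by_cases hxA : x ∈ A <;> by_cases hxB : x ∈ B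
    · exact absurd (hAB.ne_of_mem hxA hxB rfl) (fun h => h)
    · rw [if_pos hxA, if_neg hxB, Set.inter_univ]
      exact ⟨⟨-1, by norm_num⟩, convex_Iio 0⟩
    · rw [if_neg hxA, if_pos hxB, Set.univ_inter]
      exact ⟨⟨2, by norm_num⟩, convex_Ioi 1⟩
    · rw [if_neg hxA, if_neg hxB, Set.univ_inter]
      exact ⟨⟨0, trivial⟩, convex_univ⟩
  obtain ⟨f, hf, hsel⟩ := h Φ hopen hprops
  refine ⟨f ⁻¹' Set.Iio 0, f ⁻¹' Set.Ioi 1, isOpen_Iio.preimage hf, isOpen_Ioi.preimage hf,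
    ?_, ?_, ?_⟩
  · intro x hx
    have h2 : f x ∈ {y : ℝ | (x, y) ∈ Φ} := hsel x
    rw [hfib x] at h2
    simp only [if_pos hx, Set.mem_inter_iff, Set.mem_Iio] at h2
    exact h2.1
  · intro x hx
    have h2 : f x ∈ {y : ℝ | (x, y) ∈ Φ} := hsel x
    rw [hfib x] at h2
    simp only [if_pos hx, Set.mem_inter_iff, Set.mem_Ioi] at h2
    exact h2.2
  · apply Set.disjoint_left.mpr
    intro x hx1 hx2
    simp only [Set.mem_preimage, Set.mem_Iio, Set.mem_Ioi] at hx1 hx2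
    linarith
end

section
/- Let X, Y, Z be topological spaces, Φ ⊆ X × Y a relation that is lower semicontinuous (meaning {x : Φ(x) ∩ U ≠ ∅} is open in X for every open U ⊆ Y), and Ψ ⊆ Y × Z an open subset of Y × Z. Then the composite relation Ψ ∘ Φ = {(x,z) : ∃ y, (x,y) ∈ Φ ∧ (y,z) ∈ Ψ} is an open subset of X × Z. -/
/-- The composite of an l.s.c. relation with an open relation is open. -/
theorem stmt_1 {X Y Z : Type*} [TopologicalSpace X] [TopologicalSpace Y] [TopologicalSpace Z]
    (Φ : Set (X × Y)) (Ψ : Set (Y × Z))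
    (hΦ : ∀ U : Set Y, IsOpen U → IsOpen {x : X | ∃ y ∈ U, (x, y) ∈ Φ})
    (hΨ : IsOpen Ψ) :
    IsOpen {p : X × Z | ∃ y : Y, (p.1, y) ∈ Φ ∧ (y, p.2) ∈ Ψ} := by
  rw [isOpen_iff_mem_nhds]
  rintro ⟨x, z⟩ ⟨y, hxy, hyz⟩
  rcases isOpen_prod_iff.1 hΨ y z hyz with ⟨U, W, hU, hW, hyU, hzW, hUW⟩
  have hopen := hΦ U hU
  have hmem : x ∈ {x : X | ∃ y ∈ U, (x, y) ∈ Φ} := ⟨y, hyU, hxy⟩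
  rw [nhds_prod_eq]
  refine Filter.mem_of_superset
    (Filter.prod_mem_prod (hopen.mem_nhds hmem) (hW.mem_nhds hzW)) ?_
  rintro ⟨x', z'⟩ ⟨⟨y', hy'U, hxy'⟩, hz'W⟩
  exact ⟨y', hxy', hUW ⟨hy'U, hz'W⟩⟩
end

section
/- Let X be a topological space, (Y,ρ) a metric space, and Φ : X → set Y a set-valued map with nonempty values. Suppose that for every n ∈ ℕ with n ≥ 1 there exists an open relation Ω_n ⊆ X × Y such that Φ ⊆ Ω_n (as subsets of X × Y, identifying Φ with its graph) and Ω_n(x) is contained in the open (1/n)-neighborhood of Φ(x) for every x ∈ X. Then Φ is lower semicontinuous. -/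
/-- If a set-valued map `Φ` with nonempty values into a metric space is sandwiched,
for every `n ≥ 1`, between its graph and its open `1/n`-enlargement by an open
relation `Ω n`, then `Φ` is lower semicontinuous. -/
theorem stmt_4 {X Y : Type*} [TopologicalSpace X] [MetricSpace Y]
    (Φ : X → Set Y) (hne : ∀ x, (Φ x).Nonempty)
    (h : ∀ n : ℕ, 1 ≤ n → ∃ Ω : Set (X × Y), IsOpen Ω ∧
      (∀ x : X, ∀ y ∈ Φ x, (x, y) ∈ Ω) ∧
      (∀ x : X, ∀ y : Y, (x, y) ∈ Ω → ∃ z ∈ Φ x, dist y z < 1 / (n : ℝ))) :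
    ∀ U : Set Y, IsOpen U → IsOpen {x : X | (Φ x ∩ U).Nonempty} := by
  intro U hU
  rw [isOpen_iff_mem_nhds]
  rintro x₀ ⟨y, hyΦ, hyU⟩
  obtain ⟨ε, hε, hball⟩ := Metric.isOpen_iff.1 hU y hyU
  obtain ⟨n, hn⟩ := exists_nat_one_div_lt hε
  have hn1 : 1 ≤ n + 1 := Nat.le_add_left 1 n
  obtain ⟨Ω, hΩopen, hsub, hnear⟩ := h (n + 1) hn1
  have hslice : IsOpen {x : X | (x, y) ∈ Ω} :=
    hΩopen.preimage (Continuous.prodMk_left y)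
  have hx₀ : x₀ ∈ {x : X | (x, y) ∈ Ω} := hsub x₀ y hyΦ
  filter_upwards [hslice.mem_nhds hx₀] with x hx
  obtain ⟨z, hzΦ, hz⟩ := hnear x y hx
  refine ⟨z, hzΦ, hball ?_⟩
  rw [Metric.mem_ball, dist_comm]
  calc dist y z < 1 / (↑(n + 1) : ℝ) := hz
    _ < ε := by exact_mod_cast hn
end

section
/- Let X be a topological space and Φ : X → set Y a set-valued map with nonempty values into a metric space (Y,ρ). Then Φ is lower semicontinuous if and only if for every ε > 0 the relation {(x,y) : dist(y, Φ(x)) < ε} is an open subset of X × Y. -/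
/-- A nonempty-valued set-valued map into a metric space is l.s.c. iff all of its
open `ε`-enlargements are open relations. -/
theorem stmt_5 {X Y : Type*} [TopologicalSpace X] [MetricSpace Y]
    (Φ : X → Set Y) (hne : ∀ x, (Φ x).Nonempty) :
    (∀ U : Set Y, IsOpen U → IsOpen {x : X | (Φ x ∩ U).Nonempty}) ↔
      (∀ ε : ℝ, 0 < ε → IsOpen {p : X × Y | Metric.infDist p.2 (Φ p.1) < ε}) := by
  constructor
  · intro hlsc ε hε
    rw [isOpen_iff_mem_nhds]
    rintro ⟨x, y⟩ hxy
    simp only [Set.mem_setOf_eq] at hxy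
    obtain ⟨z, hz, hdz⟩ := (Metric.infDist_lt_iff (hne x)).mp hxy
    set δ : ℝ := (ε - dist y z) / 3 with hδdef
    have hδ : 0 < δ := by rw [hδdef]; linarith
    have hV : IsOpen {x' : X | (Φ x' ∩ Metric.ball z δ).Nonempty} :=
      hlsc _ Metric.isOpen_ball
    have hxV : x ∈ {x' : X | (Φ x' ∩ Metric.ball z δ).Nonempty} :=
      ⟨z, hz, Metric.mem_ball_self hδ⟩
    have : {x' : X | (Φ x' ∩ Metric.ball z δ).Nonempty} ×ˢ Metric.ball y δ ∈
        nhds (x, y) :=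
      prod_mem_nhds (hV.mem_nhds hxV) (Metric.ball_mem_nhds y hδ)
    refine Filter.mem_of_superset this ?_
    rintro ⟨x', y'⟩ ⟨⟨z', hz', hz'ball⟩, hy'⟩
    simp only [Set.mem_setOf_eq]
    calc Metric.infDist y' (Φ x') ≤ dist y' z' := Metric.infDist_le_dist_of_mem hz'
      _ ≤ dist y' y + dist y z + dist z z' := dist_triangle4 y' y z z'
      _ < δ + dist y z + δ := by
          have h1 : dist y' y < δ := by rwa [Metric.mem_ball] at hy'
          have h2 : dist z z' < δ := by
            rw [dist_comm]; rwa [Metric.mem_ball] at hz'ball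
          linarith
      _ < ε := by rw [hδdef]; linarith
  · intro hopen U hU
    rw [isOpen_iff_mem_nhds]
    intro x hx
    obtain ⟨z, hzΦ, hzU⟩ := hx
    obtain ⟨ε, hε, hball⟩ := Metric.isOpen_iff.mp hU z hzU
    have hxz : (x, z) ∈ {p : X × Y | Metric.infDist p.2 (Φ p.1) < ε} := by
      simp only [Set.mem_setOf_eq]
      rw [Metric.infDist_zero_of_mem hzΦ]; exact hε
    have hcont : Continuous fun x' : X => (x', z) := by continuity
    have : IsOpen {x' : X | Metric.infDist z (Φ x') < ε} :=
      (hopen ε hε).preimage hcont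
    refine Filter.mem_of_superset (this.mem_nhds hxz) ?_
    intro x' hx'
    obtain ⟨z', hz', hdz'⟩ := (Metric.infDist_lt_iff (hne x')).mp hx'
    exact ⟨z', hz', hball (by rwa [Metric.mem_ball, dist_comm])⟩
end

section
/- Let X be a topological space and Φ : X → set ℝ a set-valued map such that each Φ(x) is a nonempty open convex subset of ℝ and Φ is lower semicontinuous. Then the graph {(x,y) : y ∈ Φ(x)} is an open subset of X × ℝ. -/
/-- An l.s.c. set-valued map `Φ : X → Set ℝ` with nonempty open convex values
has open graph in `X × ℝ`. -/
theorem stmt_6 {X : Type*} [TopologicalSpace X]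
    (Φ : X → Set ℝ)
    (hne : ∀ x, (Φ x).Nonempty) (hop : ∀ x, IsOpen (Φ x)) (hcv : ∀ x, Convex ℝ (Φ x))
    (hlsc : ∀ U : Set ℝ, IsOpen U → IsOpen {x : X | (Φ x ∩ U).Nonempty}) :
    IsOpen {p : X × ℝ | p.2 ∈ Φ p.1} := by
  rw [isOpen_prod_iff]
  intro x y hy
  obtain ⟨ε, hε, hball⟩ := Metric.isOpen_iff.1 (hop x) y hy
  have hsub : Set.Ioo (y - ε) (y + ε) ⊆ Φ x := by
    intro z hz
    apply hball
    rw [Real.ball_eq_Ioo]; exact hz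
  refine ⟨{x' | (Φ x' ∩ Set.Ioo (y - ε) (y - ε/2)).Nonempty} ∩
      {x' | (Φ x' ∩ Set.Ioo (y + ε/2) (y + ε)).Nonempty},
      Set.Ioo (y - ε/2) (y + ε/2),
      (hlsc _ isOpen_Ioo).inter (hlsc _ isOpen_Ioo), isOpen_Ioo,
      ⟨⟨y - 3*ε/4, hsub ⟨by linarith, by linarith⟩, by constructor <;> linarith⟩,
       ⟨y + 3*ε/4, hsub ⟨by linarith, by linarith⟩, by constructor <;> linarith⟩⟩,
      ⟨by linarith, by linarith⟩, ?_⟩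
  rintro ⟨x', y'⟩ ⟨⟨⟨p, hp, hp1, hp2⟩, ⟨q, hq, hq1, hq2⟩⟩, hy'1, hy'2⟩
  exact (hcv x').ordConnected.out hp hq ⟨by simp; linarith, by simp; linarith⟩
end

section
/- Let X be a topological space. A set-valued map Φ : X → set ℝ with values in the open interval (-1,1) has open graph in X × ℝ and nonempty open convex values if and only if there exist functions ξ, η : X → [-1,1] with ξ upper semicontinuous, η lower semicontinuous, ξ(x) < η(x) for all x, and Φ(x) equal to the open interval (ξ(x), η(x)) for all x ∈ X. -/
/-- A set-valued map `Φ : X → Set ℝ` with values in `(-1,1)` has open graph and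
nonempty open convex values iff `Φ(x) = (ξ(x), η(x))` for an upper semicontinuous
`ξ` and a lower semicontinuous `η` with values in `[-1,1]` and `ξ < η`. -/
theorem stmt_7 {X : Type*} [TopologicalSpace X]
    (Φ : X → Set ℝ) (hsub : ∀ x, Φ x ⊆ Set.Ioo (-1 : ℝ) 1) :
    (IsOpen {p : X × ℝ | p.2 ∈ Φ p.1} ∧
      ∀ x, (Φ x).Nonempty ∧ IsOpen (Φ x) ∧ Convex ℝ (Φ x)) ↔
    (∃ ξ η : X → ℝ,
      (∀ x, ξ x ∈ Set.Icc (-1 : ℝ) 1) ∧ (∀ x, η x ∈ Set.Icc (-1 : ℝ) 1) ∧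
      UpperSemicontinuous ξ ∧ LowerSemicontinuous η ∧
      (∀ x, ξ x < η x) ∧ ∀ x, Φ x = Set.Ioo (ξ x) (η x)) := by
  constructor
  · rintro ⟨hg, hv⟩
    have hne : ∀ x, (Φ x).Nonempty := fun x => (hv x).1
    have hop : ∀ x, IsOpen (Φ x) := fun x => (hv x).2.1
    have hcv : ∀ x, Convex ℝ (Φ x) := fun x => (hv x).2.2
    have hbb : ∀ x, BddBelow (Φ x) := fun x => BddBelow.mono (hsub x) bddBelow_Ioo
    have hba : ∀ x, BddAbove (Φ x) := fun x => BddAbove.mono (hsub x) bddAbove_Ioo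
    refine ⟨fun x => sInf (Φ x), fun x => sSup (Φ x), ?_, ?_, ?_, ?_, ?_, ?_⟩
    · intro x
      obtain ⟨y, hy⟩ := hne x
      constructor
      · exact le_csInf (hne x) fun z hz => (hsub x hz).1.le
      · exact (csInf_le (hbb x) hy).trans (hsub x hy).2.le
    · intro x
      obtain ⟨y, hy⟩ := hne x
      constructor
      · exact (hsub x hy).1.le.trans (le_csSup (hba x) hy)
      · exact csSup_le (hne x) fun z hz => (hsub x hz).2.le
    · intro x r hr
      obtain ⟨z, hz, hzr⟩ := exists_lt_of_csInf_lt (hne x) hr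
      obtain ⟨u, v, hu, hv', hxu, hzv, huv⟩ :=
        isOpen_prod_iff.mp hg x z hz
      filter_upwards [hu.mem_nhds hxu] with x' hx'
      exact lt_of_le_of_lt (csInf_le (hbb x') (huv (Set.mk_mem_prod hx' hzv))) hzr
    · intro x r hr
      obtain ⟨z, hz, hzr⟩ := exists_lt_of_lt_csSup (hne x) hr
      obtain ⟨u, v, hu, hv', hxu, hzv, huv⟩ :=
        isOpen_prod_iff.mp hg x z hz
      filter_upwards [hu.mem_nhds hxu] with x' hx'
      exact lt_of_lt_of_le hzr (le_csSup (hba x') (huv (Set.mk_mem_prod hx' hzv)))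
    · intro x
      obtain ⟨y, hy⟩ := hne x
      obtain ⟨ε, hε, hball⟩ := Metric.isOpen_iff.mp (hop x) y hy
      have h1 : y - ε / 2 ∈ Φ x := by
        apply hball
        simp [Real.dist_eq]
        rw [abs_of_pos (by linarith)]
        linarith
      have h2 : y + ε / 2 ∈ Φ x := by
        apply hball
        simp [Real.dist_eq]
        rw [abs_of_pos (by linarith)]
        linarith
      calc sInf (Φ x) ≤ y - ε / 2 := csInf_le (hbb x) h1
        _ < y + ε / 2 := by linarith
        _ ≤ sSup (Φ x) := le_csSup (hba x) h2
    · intro x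
      apply Set.Subset.antisymm
      · intro y hy
        obtain ⟨ε, hε, hball⟩ := Metric.isOpen_iff.mp (hop x) y hy
        have h1 : y - ε / 2 ∈ Φ x := by
          apply hball
          simp [Real.dist_eq]
          rw [abs_of_pos (by linarith)]
          linarith
        have h2 : y + ε / 2 ∈ Φ x := by
          apply hball
          simp [Real.dist_eq]
          rw [abs_of_pos (by linarith)]
          linarith
        constructor
        · exact lt_of_le_of_lt (csInf_le (hbb x) h1) (by linarith)
        · exact lt_of_lt_of_le (by linarith) (le_csSup (hba x) h2)
      · exact IsConnected.Ioo_csInf_csSup_subset ⟨hne x, (hcv x).isPreconnected⟩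
          (hbb x) (hba x)
  · rintro ⟨ξ, η, hξm, hηm, hξ, hη, hlt, heq⟩
    constructor
    · have hrw : {p : X × ℝ | p.2 ∈ Φ p.1} =
          {p : X × ℝ | ξ p.1 < p.2} ∩ {p : X × ℝ | p.2 < η p.1} := by
        ext p
        simp [heq p.1, Set.mem_Ioo]
      rw [hrw]
      apply IsOpen.inter
      · rw [isOpen_iff_mem_nhds]
        rintro ⟨x, y⟩ h
        obtain ⟨r, hr1, hr2⟩ := exists_between (show ξ x < y from h)
        have h1 : {x' | ξ x' < r} ∈ nhds x := hξ x r hr1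
        have h2 : Set.Ioi r ∈ nhds y := Ioi_mem_nhds hr2
        exact Filter.mem_of_superset (prod_mem_nhds h1 h2)
          (fun p hp => show ξ p.1 < p.2 from lt_trans hp.1 hp.2)
      · rw [isOpen_iff_mem_nhds]
        rintro ⟨x, y⟩ h
        obtain ⟨r, hr1, hr2⟩ := exists_between (show y < η x from h)
        have h1 : {x' | r < η x'} ∈ nhds x := hη x r hr2
        have h2 : Set.Iio r ∈ nhds y := Iio_mem_nhds hr1
        exact Filter.mem_of_superset (prod_mem_nhds h1 h2)
          (fun p hp => show p.2 < η p.1 from lt_trans hp.2 hp.1)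
    · intro x
      rw [heq x]
      exact ⟨Set.nonempty_Ioo.mpr (hlt x), isOpen_Ioo, convex_Ioo _ _⟩
end

section
/- Let X be a topological space with the property that every open relation Φ ⊆ X × ℝ whose fibers are nonempty and convex admits a continuous selection. Then for every upper semicontinuous ξ : X → ℝ and lower semicontinuous η : X → ℝ with ξ(x) < η(x) for all x, there exists a continuous f : X → ℝ with ξ(x) < f(x) < η(x) for all x. Conversely, this insertion property implies the selection property. -/
open Set

/-- The selection property for convex-valued open relations `Φ ⊆ X × ℝ` is
equivalent to the Dowker–Katětov insertion property. -/
theorem stmt_8 {X : Type*} [TopologicalSpace X] :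
    (∀ Φ : Set (X × ℝ), IsOpen Φ →
      (∀ x : X, {y : ℝ | (x, y) ∈ Φ}.Nonempty ∧ Convex ℝ {y : ℝ | (x, y) ∈ Φ}) →
      ∃ f : X → ℝ, Continuous f ∧ ∀ x : X, (x, f x) ∈ Φ) ↔
    (∀ ξ η : X → ℝ, UpperSemicontinuous ξ → LowerSemicontinuous η →
      (∀ x, ξ x < η x) →
      ∃ f : X → ℝ, Continuous f ∧ ∀ x, ξ x < f x ∧ f x < η x) := by
  constructor
  · -- selection ⇒ insertion
    intro hsel ξ η hξ hη hlt
    have hopen1 : IsOpen {p : X × ℝ | ξ p.1 < p.2} := by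
      have : {p : X × ℝ | ξ p.1 < p.2} = ⋃ q : ℚ, {x | ξ x < (q : ℝ)} ×ˢ Ioi (q : ℝ) := by
        ext ⟨x, y⟩
        simp only [mem_setOf_eq, mem_iUnion, mem_prod, mem_Ioi]
        constructor
        · intro h
          obtain ⟨q, hq1, hq2⟩ := exists_rat_btwn h
          exact ⟨q, hq1, hq2⟩
        · rintro ⟨q, h1, h2⟩; exact h1.trans h2
      rw [this]
      exact isOpen_iUnion fun q =>
        (upperSemicontinuous_iff_isOpen_preimage.1 hξ _).prod isOpen_Ioi
    have hopen2 : IsOpen {p : X × ℝ | p.2 < η p.1} := by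
      have : {p : X × ℝ | p.2 < η p.1} = ⋃ q : ℚ, {x | (q : ℝ) < η x} ×ˢ Iio (q : ℝ) := by
        ext ⟨x, y⟩
        simp only [mem_setOf_eq, mem_iUnion, mem_prod, mem_Iio]
        constructor
        · intro h
          obtain ⟨q, hq1, hq2⟩ := exists_rat_btwn h
          exact ⟨q, hq2, hq1⟩
        · rintro ⟨q, h1, h2⟩; exact h2.trans h1
      rw [this]
      exact isOpen_iUnion fun q =>
        (lowerSemicontinuous_iff_isOpen_preimage.1 hη _).prod isOpen_Iio
    obtain ⟨f, hf, hfx⟩ := hsel {p : X × ℝ | ξ p.1 < p.2 ∧ p.2 < η p.1}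
      (hopen1.inter hopen2) (fun x => by
        have : {y : ℝ | ξ x < y ∧ y < η x} = Ioo (ξ x) (η x) := rfl
        exact ⟨this ▸ nonempty_Ioo.2 (hlt x), this ▸ convex_Ioo _ _⟩)
    exact ⟨f, hf, fun x => hfx x⟩
  · -- insertion ⇒ selection
    intro hins Φ hΦ hfib
    set e := orderIsoIooNegOneOne ℝ with he
    set j : ℝ → ℝ := fun y => (e y : ℝ) with hj
    have hjmono : StrictMono j := fun a b h => Subtype.coe_lt_coe.2 (e.strictMono h)
    have hjo : IsOpenMap j := (isOpen_Ioo (a := (-1 : ℝ)) (b := 1)).isOpenMap_subtype_val.comp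
      e.toHomeomorph.isOpenMap
    have hjrange : ∀ s ∈ Ioo (-1 : ℝ) 1, ∃ y, j y = s := fun s hs =>
      ⟨e.symm ⟨s, hs⟩, congrArg Subtype.val (e.apply_symm_apply ⟨s, hs⟩)⟩
    set S : X → Set ℝ := fun x => j '' {y | (x, y) ∈ Φ} with hS
    set Φ' : Set (X × ℝ) := Prod.map id j '' Φ with hΦ'
    have hΦ'open : IsOpen Φ' := (IsOpenMap.id.prodMap hjo) Φ hΦ
    have hfiber : ∀ x, {s | (x, s) ∈ Φ'} = S x := by
      intro x; ext s
      constructor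
      · rintro ⟨⟨a, b⟩, hab, heq⟩
        obtain ⟨h1, h2⟩ := Prod.mk.injEq .. ▸ heq
        exact ⟨b, h1 ▸ hab, h2⟩
      · rintro ⟨y, hy, rfl⟩
        exact ⟨(x, y), hy, rfl⟩
    have hSsub : ∀ x, S x ⊆ Ioo (-1 : ℝ) 1 := by
      rintro x _ ⟨y, -, rfl⟩; exact (e y).2
    have hSne : ∀ x, (S x).Nonempty := fun x => (hfib x).1.image j
    have hSbb : ∀ x, BddBelow (S x) := fun x => (bddBelow_Ioo ..).mono (hSsub x)
    have hSba : ∀ x, BddAbove (S x) := fun x => (bddAbove_Ioo ..).mono (hSsub x)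
    have hSord : ∀ x, (S x).OrdConnected := by
      intro x
      constructor
      rintro _ ⟨a, ha, rfl⟩ _ ⟨b, hb, rfl⟩ z hz
      have hz' : z ∈ Ioo (-1 : ℝ) 1 :=
        ⟨lt_of_lt_of_le (e a).2.1 hz.1, lt_of_le_of_lt hz.2 (e b).2.2⟩
      obtain ⟨w, rfl⟩ := hjrange z hz'
      have hw : w ∈ {y | (x, y) ∈ Φ} :=
        (convex_iff_ordConnected.1 (hfib x).2).out ha hb
          ⟨hjmono.le_iff_le.1 hz.1, hjmono.le_iff_le.1 hz.2⟩
      exact ⟨w, hw, rfl⟩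
    have hSopen : ∀ x, IsOpen (S x) := fun x => by
      rw [← hfiber]
      exact hΦ'open.preimage (continuous_const.prodMk continuous_id)
    set lo : X → ℝ := fun x => sInf (S x) with hlo
    set hi : X → ℝ := fun x => sSup (S x) with hhi
    have hlohi : ∀ x, lo x < hi x := by
      intro x
      obtain ⟨s, hs⟩ := hSne x
      obtain ⟨ε, hε, hball⟩ := Metric.isOpen_iff.1 (hSopen x) s hs
      have h1 : s - ε / 2 ∈ S x := hball (by rw [Real.ball_eq_Ioo]; constructor <;> linarith)
      have h2 : s + ε / 2 ∈ S x := hball (by rw [Real.ball_eq_Ioo]; constructor <;> linarith)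
      have := csInf_le (hSbb x) h1
      have := le_csSup (hSba x) h2
      simp only [hlo, hhi]
      linarith
    have husc : UpperSemicontinuous lo := by
      rw [upperSemicontinuous_iff_isOpen_preimage]
      intro r
      have : lo ⁻¹' Iio r = Prod.fst '' (Φ' ∩ univ ×ˢ Iio r) := by
        ext x
        simp only [mem_preimage, mem_Iio, mem_image, mem_inter_iff, mem_prod, mem_univ, true_and]
        constructor
        · intro h
          obtain ⟨s, hsS, hsr⟩ := exists_lt_of_csInf_lt (hSne x) h
          exact ⟨(x, s), ⟨by rw [← hfiber x] at hsS; exact hsS, hsr⟩, rfl⟩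
        · rintro ⟨⟨a, s⟩, ⟨hmem, hs⟩, rfl⟩
          have : s ∈ S a := by rw [← hfiber a]; exact hmem
          exact csInf_lt_of_lt (hSbb a) this hs
      rw [this]
      exact isOpenMap_fst _ (hΦ'open.inter (isOpen_univ.prod isOpen_Iio))
    have hlsc : LowerSemicontinuous hi := by
      rw [lowerSemicontinuous_iff_isOpen_preimage]
      intro r
      have : hi ⁻¹' Ioi r = Prod.fst '' (Φ' ∩ univ ×ˢ Ioi r) := by
        ext x
        simp only [mem_preimage, mem_Ioi, mem_image, mem_inter_iff, mem_prod, mem_univ, true_and]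
        constructor
        · intro h
          obtain ⟨s, hsS, hsr⟩ := exists_lt_of_lt_csSup (hSne x) h
          exact ⟨(x, s), ⟨by rw [← hfiber x] at hsS; exact hsS, hsr⟩, rfl⟩
        · rintro ⟨⟨a, s⟩, ⟨hmem, hs⟩, rfl⟩
          have : s ∈ S a := by rw [← hfiber a]; exact hmem
          exact lt_csSup_of_lt (hSba a) this hs
      rw [this]
      exact isOpenMap_fst _ (hΦ'open.inter (isOpen_univ.prod isOpen_Ioi))
    obtain ⟨u, hu, huin⟩ := hins lo hi husc hlsc hlohi
    have huS : ∀ x, u x ∈ S x := by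
      intro x
      obtain ⟨a, haS, hau⟩ := exists_lt_of_csInf_lt (hSne x) (huin x).1
      obtain ⟨b, hbS, hub⟩ := exists_lt_of_lt_csSup (hSne x) (huin x).2
      exact (hSord x).out haS hbS ⟨hau.le, hub.le⟩
    refine ⟨fun x => e.symm ⟨u x, hSsub x (huS x)⟩, ?_, ?_⟩
    · exact e.symm.continuous.comp (hu.subtype_mk _)
    · intro x
      obtain ⟨y, hy, hjy⟩ := huS x
      have h1 : j (e.symm ⟨u x, hSsub x (huS x)⟩) = u x :=
        congrArg Subtype.val (e.apply_symm_apply _)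
      have h2 : e.symm ⟨u x, hSsub x (huS x)⟩ = y := hjmono.injective (h1.trans hjy.symm)
      show (x, e.symm ⟨u x, hSsub x (huS x)⟩) ∈ Φ
      rw [h2]; exact hy
end

section
/- Let X be a countably paracompact normal topological space and E a separable topological vector space over ℝ. Then every open relation Φ ⊆ X × E whose fibers Φ(x) are nonempty and convex admits a continuous selection f : X → E. -/
open Set Function TopologicalSpace

/-- A space is countably paracompact if every countable open cover has a locally
finite open (indexed) refinement. -/
def CountablyParacompact (X : Type*) [TopologicalSpace X] : Prop :=
  ∀ U : ℕ → Set X, (∀ n, IsOpen (U n)) → (⋃ n, U n) = Set.univ →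
    ∃ V : ℕ → Set X, (∀ n, IsOpen (V n)) ∧ (⋃ n, V n) = Set.univ ∧
      (∀ n, V n ⊆ U n) ∧ LocallyFinite V

/-- On a countably paracompact normal space, every convex-valued open relation
into a separable topological vector space has a continuous selection. -/
theorem stmt_9 {X E : Type*} [TopologicalSpace X] [T2Space X] [NormalSpace X]
    (hcp : CountablyParacompact X)
    [AddCommGroup E] [Module ℝ E] [TopologicalSpace E] [T2Space E]
    [IsTopologicalAddGroup E] [ContinuousSMul ℝ E] [TopologicalSpace.SeparableSpace E]
    (Φ : Set (X × E)) (hΦ : IsOpen Φ)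
    (hfib : ∀ x : X, {y : E | (x, y) ∈ Φ}.Nonempty ∧ Convex ℝ {y : E | (x, y) ∈ Φ}) :
    ∃ f : X → E, Continuous f ∧ ∀ x : X, (x, f x) ∈ Φ := by
  cases isEmpty_or_nonempty X with
  | inl h =>
    refine ⟨fun x => isEmptyElim x, ⟨fun s _ => ?_⟩, fun x => isEmptyElim x⟩
    have : (fun x : X => (isEmptyElim x : E)) ⁻¹' s = ∅ := Set.eq_empty_of_isEmpty _
    rw [this]; exact isOpen_empty
  | inr h =>
    haveI : Nonempty E := ⟨(hfib h.some).1.choose⟩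
    set d : ℕ → E := denseSeq E with hd
    have hdr : DenseRange d := denseRange_denseSeq E
    set U : ℕ → Set X := fun n => {x | (x, d n) ∈ Φ} with hU
    have hUopen : ∀ n, IsOpen (U n) := fun n =>
      hΦ.preimage (Continuous.prodMk_left (d n))
    have hUcov : (⋃ n, U n) = Set.univ := by
      refine eq_univ_of_forall fun x => ?_
      have hopen : IsOpen {y : E | (x, y) ∈ Φ} := hΦ.preimage (Continuous.prodMk_right x)
      rcases hdr.exists_mem_open hopen (hfib x).1 with ⟨n, hn⟩
      exact mem_iUnion.2 ⟨n, hn⟩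
    obtain ⟨V, hVopen, hVcov, hVU, hVlf⟩ := hcp U hUopen hUcov
    obtain ⟨b, hb⟩ := BumpCovering.exists_isSubordinate_of_locallyFinite
      (isClosed_univ (X := X)) V hVopen hVlf (by rw [hVcov])
    set p := b.toPartitionOfUnity with hp
    have hpsub : p.IsSubordinate V := hb.toPartitionOfUnity
    refine ⟨fun x => ∑ᶠ n, p n x • d n, ?_, ?_⟩
    · exact hpsub.continuous_finsum_smul hVopen (g := fun n _ => d n)
        (fun n => continuousOn_const)
    · intro x
      exact p.finsum_smul_mem_convex (g := fun n _ => d n) (mem_univ x)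
        (fun n hn => hVU n (hpsub n (subset_tsupport _ (by simpa using hn))))
        (hfib x).2
end

section
/- Let X be a topological space such that every open relation Φ ⊆ X × ℝ with nonempty convex fibers admits a continuous selection. Then X is countably paracompact: every countable open cover of X, indexed by ℕ, admits a locally finite open refinement. -/
/-- If every convex-valued open relation `Φ ⊆ X × ℝ` admits a continuous
selection, then `X` is countably paracompact. -/
theorem stmt_10 {X : Type*} [TopologicalSpace X]
    (h : ∀ Φ : Set (X × ℝ), IsOpen Φ →
      (∀ x : X, {y : ℝ | (x, y) ∈ Φ}.Nonempty ∧ Convex ℝ {y : ℝ | (x, y) ∈ Φ}) →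
      ∃ f : X → ℝ, Continuous f ∧ ∀ x : X, (x, f x) ∈ Φ) :
    ∀ U : ℕ → Set X, (∀ n, IsOpen (U n)) → (⋃ n, U n) = Set.univ →
      ∃ V : ℕ → Set X, (∀ n, IsOpen (V n)) ∧ (⋃ n, V n) = Set.univ ∧
        (∀ n, V n ⊆ U n) ∧ LocallyFinite V := by
  intro U hUo hUc
  set W : ℕ → Set X := fun n => ⋃ k ≤ n, U k with hW
  have hWo : ∀ n, IsOpen (W n) := fun n => isOpen_biUnion fun k _ => hUo k
  set Φ : Set (X × ℝ) := ⋃ n : ℕ, (W n) ×ˢ Set.Ioi (n : ℝ) with hΦ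
  have hΦo : IsOpen Φ := isOpen_iUnion fun n => (hWo n).prod isOpen_Ioi
  have hmem : ∀ x (y : ℝ), (x, y) ∈ Φ ↔ ∃ n : ℕ, x ∈ W n ∧ (n : ℝ) < y := by
    intro x y; simp [hΦ, Set.mem_iUnion, Set.mem_prod]
  have hfib : ∀ x : X, {y : ℝ | (x, y) ∈ Φ}.Nonempty ∧ Convex ℝ {y : ℝ | (x, y) ∈ Φ} := by
    intro x
    have hx : ∃ m, x ∈ U m := by
      have : x ∈ ⋃ n, U n := hUc ▸ Set.mem_univ x
      simpa using this
    obtain ⟨m, hm⟩ := hx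
    constructor
    · exact ⟨(m : ℝ) + 1, (hmem x _).2 ⟨m, Set.mem_biUnion (Set.mem_setOf_eq ▸ le_rfl : m ∈ {k : ℕ | k ≤ m}) hm, by linarith⟩⟩
    · rw [convex_iff_ordConnected]
      constructor
      intro y hy z _ w hw
      obtain ⟨n, hn, hny⟩ := (hmem x y).1 hy
      exact (hmem x w).2 ⟨n, hn, lt_of_lt_of_le hny hw.1⟩
  obtain ⟨f, hf, hsel⟩ := h Φ hΦo hfib
  -- auxiliary refinement of W
  set V' : ℕ → Set X := fun n => W n ∩ {x | (n : ℝ) < f x + 1} with hV'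
  have hV'o : ∀ n, IsOpen (V' n) :=
    fun n => (hWo n).inter (isOpen_lt continuous_const (hf.add continuous_const))
  set V : ℕ → Set X := fun k => U k ∩ ⋃ n ∈ {n : ℕ | k ≤ n}, V' n with hV
  refine ⟨V, ?_, ?_, ?_, ?_⟩
  · exact fun k => (hUo k).inter (isOpen_biUnion fun n _ => hV'o n)
  · apply Set.eq_univ_of_forall
    intro x
    obtain ⟨n, hn, hnf⟩ := (hmem x (f x)).1 (hsel x)
    obtain ⟨k, hk, hxk⟩ : ∃ k, k ≤ n ∧ x ∈ U k := by
      simpa [hW] using hn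
    refine Set.mem_iUnion.2 ⟨k, hxk, ?_⟩
    exact Set.mem_biUnion hk ⟨hn, by simpa using hnf.trans (by linarith)⟩
  · exact fun k => Set.inter_subset_left
  · intro x
    refine ⟨f ⁻¹' Set.Iio (f x + 1), (isOpen_Iio.preimage hf).mem_nhds (by simp), ?_⟩
    have : {k : ℕ | (V k ∩ f ⁻¹' Set.Iio (f x + 1)).Nonempty} ⊆
        {k : ℕ | (k : ℝ) < f x + 2} := by
      rintro k ⟨y, hyV, hyN⟩
      obtain ⟨n, hn, hyn⟩ := Set.mem_iUnion₂.1 hyV.2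
      have h1 : (n : ℝ) < f y + 1 := hyn.2
      have h2 : f y < f x + 1 := hyN
      have h3 : (k : ℝ) ≤ (n : ℝ) := by exact_mod_cast hn
      simp only [Set.mem_setOf_eq]
      linarith
    refine Set.Finite.subset ?_ this
    have : {k : ℕ | (k : ℝ) < f x + 2} ⊆ {k : ℕ | k < ⌈f x + 2⌉₊} := by
      intro k hk
      exact Nat.lt_ceil.2 hk
    exact (Set.finite_lt_nat _).subset this
end

section
/- Let X be a topological space. Then X is countably paracompact and normal if and only if every lower semicontinuous set-valued map Φ : X → set ℝ whose values are nonempty open convex subsets of ℝ admits a continuous selection. -/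
open Set

/-- Forward direction: countably paracompact + normal implies the selection property. -/
theorem selection_of_cp_normal {X : Type*} [TopologicalSpace X]
    (hcp : CountablyParacompact X) (hn : NormalSpace X)
    (Φ : X → Set ℝ) (hne : ∀ x, (Φ x).Nonempty) (hop : ∀ x, IsOpen (Φ x))
    (hconv : ∀ x, Convex ℝ (Φ x))
    (hlsc : ∀ U : Set ℝ, IsOpen U → IsOpen {x : X | (Φ x ∩ U).Nonempty}) :
    ∃ f : X → ℝ, Continuous f ∧ ∀ x, f x ∈ Φ x := by
  classical
  set e : ℕ → ℚ × ℚ := fun n => (Denumerable.eqv (ℚ × ℚ)).symm n with he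
  set U : ℕ → Set X := fun n =>
    if (e n).1 < (e n).2 then
      {x | (Φ x ∩ Set.Iio ((e n).1 : ℝ)).Nonempty} ∩
      {x | (Φ x ∩ Set.Ioi ((e n).2 : ℝ)).Nonempty}
    else ∅ with hU
  have hUo : ∀ n, IsOpen (U n) := by
    intro n
    by_cases h : (e n).1 < (e n).2
    · simp only [hU, if_pos h]
      exact (hlsc _ isOpen_Iio).inter (hlsc _ isOpen_Ioi)
    · simp only [hU, if_neg h]
      exact isOpen_empty
  have hUcov : (⋃ n, U n) = Set.univ := by
    apply Set.eq_univ_of_forall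
    intro x
    obtain ⟨t, ht⟩ := hne x
    obtain ⟨ε, hε, hsub⟩ : ∃ ε > 0, Set.Ioo (t - ε) (t + ε) ⊆ Φ x := by
      rcases Metric.isOpen_iff.mp (hop x) t ht with ⟨ε, h1, h2⟩
      exact ⟨ε, h1, by rwa [Real.ball_eq_Ioo] at h2⟩
    obtain ⟨p, hp1, hp2⟩ := exists_rat_btwn (show t - ε/2 < t by linarith)
    obtain ⟨r, hr1, hr2⟩ := exists_rat_btwn (show t < t + ε/2 by linarith)
    refine Set.mem_iUnion.2 ⟨Denumerable.eqv (ℚ × ℚ) (p, r), ?_⟩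
    have hen : e (Denumerable.eqv (ℚ × ℚ) (p, r)) = (p, r) := by
      simp [he]
    have hpr : (p : ℝ) < (r : ℝ) := lt_trans hp2 hr1
    simp only [hU, hen]
    rw [if_pos (by exact_mod_cast hpr)]
    constructor
    · exact ⟨t - ε/2, hsub ⟨by linarith, by linarith⟩, hp1⟩
    · exact ⟨t + ε/2, hsub ⟨by linarith, by linarith⟩, hr2⟩
  obtain ⟨V, hVo, hVcov, hVU, hVlf⟩ := hcp U hUo hUcov
  obtain ⟨ρ, hρ⟩ := PartitionOfUnity.exists_isSubordinate_of_locallyFinite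
    isClosed_univ V hVo hVlf (by rw [hVcov])
  set c : ℕ → ℝ := fun n => ((e n).1 : ℝ) with hc
  refine ⟨fun x => ∑ᶠ n, ρ n x • c n, ?_, ?_⟩
  · exact ρ.continuous_finsum_smul (fun i x _ => continuousAt_const)
  · intro x
    have key : ∀ n ∈ ρ.finsupport x, c n ∈ Φ x := by
      intro n hn'
      have hsup : x ∈ Function.support (ρ n) := (ρ.mem_finsupport x).1 hn'
      have hxV : x ∈ V n := hρ n (subset_closure hsup)
      have hxU : x ∈ U n := hVU n hxV
      by_cases h : (e n).1 < (e n).2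
      · simp only [hU, if_pos h] at hxU
        obtain ⟨⟨a, haΦ, ha⟩, ⟨b, hbΦ, hb⟩⟩ := hxU
        have : Set.Icc a b ⊆ Φ x := (hconv x).ordConnected.out haΦ hbΦ
        refine this ⟨le_of_lt ha, ?_⟩
        have : ((e n).1 : ℝ) < ((e n).2 : ℝ) := by exact_mod_cast h
        simp only [Set.mem_Ioi] at hb
        exact le_of_lt (lt_trans this hb)
      · simp only [hU, if_neg h] at hxU
        exact absurd hxU (Set.notMem_empty x)
    have hsum : ∑ᶠ n, ρ n x • c n = ∑ n ∈ ρ.finsupport x, ρ n x • c n :=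
      (ρ.sum_finsupport_smul_eq_finsum (fun n _ => c n)).symm
    show (∑ᶠ n, ρ n x • c n) ∈ Φ x
    rw [hsum]
    exact (hconv x).sum_mem (fun i _ => ρ.nonneg i x) (ρ.sum_finsupport (Set.mem_univ x)) key

/-- `X` is countably paracompact and normal iff every l.s.c. set-valued map
`Φ : X → Set ℝ` with nonempty open convex values has a continuous selection. -/
theorem stmt_11 {X : Type*} [TopologicalSpace X] [T2Space X] :
    (CountablyParacompact X ∧ NormalSpace X) ↔
    (∀ Φ : X → Set ℝ,
      (∀ x, (Φ x).Nonempty) → (∀ x, IsOpen (Φ x)) → (∀ x, Convex ℝ (Φ x)) →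
      (∀ U : Set ℝ, IsOpen U → IsOpen {x : X | (Φ x ∩ U).Nonempty}) →
      ∃ f : X → ℝ, Continuous f ∧ ∀ x, f x ∈ Φ x) := by
  constructor
  · rintro ⟨hcp, hn⟩ Φ hne hop hconv hlsc
    exact selection_of_cp_normal hcp hn Φ hne hop hconv hlsc
  · intro H
    constructor
    · -- countably paracompact
      intro U hUo hUcov
      classical
      have hex : ∀ x : X, ∃ n, x ∈ U n := fun x => by
        have : x ∈ ⋃ n, U n := hUcov ▸ Set.mem_univ x
        exact Set.mem_iUnion.1 this
      set m : X → ℕ := fun x => Nat.find (hex x) with hm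
      set c : ℕ → ℝ := fun n => (2⁻¹ : ℝ) ^ n with hc
      have hcpos : ∀ n, 0 < c n := fun n => pow_pos (by norm_num) n
      have hcanti : ∀ {a b : ℕ}, a ≤ b → c b ≤ c a := fun hab =>
        pow_le_pow_of_le_one (by norm_num) (by norm_num) hab
      set Φ : X → Set ℝ := fun x => Set.Ioo 0 (c (m x)) with hΦ
      have hsel : ∃ f : X → ℝ, Continuous f ∧ ∀ x, f x ∈ Φ x := by
        apply H
        · intro x
          exact ⟨c (m x) / 2, by constructor <;> [positivity; linarith [hcpos (m x)]]⟩
        · intro x; exact isOpen_Ioo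
        · intro x; exact convex_Ioo _ _
        · intro W hW
          have : {x : X | (Φ x ∩ W).Nonempty} =
              ⋃ (n : ℕ) (_ : (W ∩ Set.Ioo 0 (c n)).Nonempty), U n := by
            ext x
            simp only [Set.mem_setOf_eq, Set.mem_iUnion]
            constructor
            · rintro ⟨u, ⟨hu1, hu2⟩, huW⟩
              exact ⟨m x, ⟨u, huW, hu1, hu2⟩, Nat.find_spec (hex x)⟩
            · rintro ⟨n, ⟨u, huW, hu1, hu2⟩, hxU⟩
              have hmn : m x ≤ n := Nat.find_min' (hex x) hxU
              exact ⟨u, ⟨hu1, lt_of_lt_of_le hu2 (hcanti hmn)⟩, huW⟩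
          rw [this]
          exact isOpen_iUnion fun n => isOpen_iUnion fun _ => hUo n
      obtain ⟨f, hfc, hfm⟩ := hsel
      have hfpos : ∀ x, 0 < f x := fun x => (hfm x).1
      have hflt : ∀ x, f x < c (m x) := fun x => (hfm x).2
      refine ⟨fun n => U n ∩ f ⁻¹' Set.Iio (2 * c n), ?_, ?_, ?_, ?_⟩
      · exact fun n => (hUo n).inter (isOpen_Iio.preimage hfc)
      · apply Set.eq_univ_of_forall
        intro x
        refine Set.mem_iUnion.2 ⟨m x, Nat.find_spec (hex x), ?_⟩
        simp only [Set.mem_preimage, Set.mem_Iio]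
        linarith [hflt x, hcpos (m x)]
      · exact fun n => Set.inter_subset_left
      · intro x
        refine ⟨f ⁻¹' Set.Ioi (f x / 2), (isOpen_Ioi.preimage hfc).mem_nhds (by
          simp only [Set.mem_preimage, Set.mem_Ioi]; linarith [hfpos x]), ?_⟩
        obtain ⟨N, hN⟩ := exists_pow_lt_of_lt_one (show (0:ℝ) < f x / 4 by
          linarith [hfpos x]) (show (2⁻¹ : ℝ) < 1 by norm_num)
        apply Set.Finite.subset (Set.finite_Iio N)
        intro n hn
        rcases hn with ⟨y, ⟨_, hy2⟩, hy3⟩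
        simp only [Set.mem_preimage, Set.mem_Iio] at hy2
        simp only [Set.mem_preimage, Set.mem_Ioi] at hy3
        by_contra hcon
        simp only [Set.mem_Iio, not_lt] at hcon
        have : c n ≤ c N := hcanti hcon
        have hcN : c N < f x / 4 := hN
        linarith
    · -- normal
      classical
      refine ⟨fun A B hA hB hAB => ?_⟩
      set Φ : X → Set ℝ := fun x =>
        if x ∈ A then Set.Ioi 0 else if x ∈ B then Set.Iio 0 else Set.univ with hΦ
      have hABm : ∀ x, x ∈ B → x ∉ A := fun x hx hxA =>
        Set.disjoint_left.1 hAB hxA hx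
      have hsel : ∃ f : X → ℝ, Continuous f ∧ ∀ x, f x ∈ Φ x := by
        apply H
        · intro x
          by_cases h1 : x ∈ A
          · exact ⟨1, by simp [hΦ, h1]⟩
          · by_cases h2 : x ∈ B
            · exact ⟨-1, by simp [hΦ, h1, h2]⟩
            · exact ⟨0, by simp [hΦ, h1, h2]⟩
        · intro x
          by_cases h1 : x ∈ A
          · simp only [hΦ, if_pos h1]; exact isOpen_Ioi
          · by_cases h2 : x ∈ B
            · simp only [hΦ, if_neg h1, if_pos h2]; exact isOpen_Iio
            · simp only [hΦ, if_neg h1, if_neg h2]; exact isOpen_univ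
        · intro x
          by_cases h1 : x ∈ A
          · simp only [hΦ, if_pos h1]; exact convex_Ioi _
          · by_cases h2 : x ∈ B
            · simp only [hΦ, if_neg h1, if_pos h2]; exact convex_Iio _
            · simp only [hΦ, if_neg h1, if_neg h2]; exact convex_univ
        · intro W hW
          by_cases h1 : (W ∩ Set.Ioi 0).Nonempty <;>
            by_cases h2 : (W ∩ Set.Iio 0).Nonempty
          · have : {x : X | (Φ x ∩ W).Nonempty} = Set.univ := by
              apply Set.eq_univ_of_forall
              intro x
              simp only [Set.mem_setOf_eq, hΦ]
              by_cases hxA : x ∈ A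
              · rw [if_pos hxA]
                obtain ⟨u, hu1, hu2⟩ := h1
                exact ⟨u, hu2, hu1⟩
              · by_cases hxB : x ∈ B
                · rw [if_neg hxA, if_pos hxB]
                  obtain ⟨u, hu1, hu2⟩ := h2
                  exact ⟨u, hu2, hu1⟩
                · rw [if_neg hxA, if_neg hxB]
                  obtain ⟨u, hu1, _⟩ := h1
                  exact ⟨u, Set.mem_univ u, hu1⟩
            rw [this]; exact isOpen_univ
          · have : {x : X | (Φ x ∩ W).Nonempty} = Bᶜ := by
              ext x
              simp only [Set.mem_setOf_eq, hΦ, Set.mem_compl_iff]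
              constructor
              · rintro ⟨u, hu1, hu2⟩ hxB
                rw [if_neg (hABm x hxB), if_pos hxB] at hu1
                exact h2 ⟨u, hu2, hu1⟩
              · intro hxB
                by_cases hxA : x ∈ A
                · rw [if_pos hxA]
                  obtain ⟨u, hu1, hu2⟩ := h1
                  exact ⟨u, hu2, hu1⟩
                · rw [if_neg hxA, if_neg hxB]
                  obtain ⟨u, hu1, _⟩ := h1
                  exact ⟨u, Set.mem_univ u, hu1⟩
            rw [this]; exact hB.isOpen_compl
          · have : {x : X | (Φ x ∩ W).Nonempty} = Aᶜ := by
              ext x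
              simp only [Set.mem_setOf_eq, hΦ, Set.mem_compl_iff]
              constructor
              · rintro ⟨u, hu1, hu2⟩ hxA
                rw [if_pos hxA] at hu1
                exact h1 ⟨u, hu2, hu1⟩
              · intro hxA
                by_cases hxB : x ∈ B
                · rw [if_neg hxA, if_pos hxB]
                  obtain ⟨u, hu1, hu2⟩ := h2
                  exact ⟨u, hu2, hu1⟩
                · rw [if_neg hxA, if_neg hxB]
                  obtain ⟨u, hu1, _⟩ := h2
                  exact ⟨u, Set.mem_univ u, hu1⟩
            rw [this]; exact hA.isOpen_compl
          · have hWempty : W = ∅ := by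
              by_contra hne'
              obtain ⟨w, hw⟩ := Set.nonempty_iff_ne_empty.2 hne'
              have hw0 : w = 0 := by
                by_contra hw0
                rcases lt_or_gt_of_ne hw0 with h | h
                · exact h2 ⟨w, hw, h⟩
                · exact h1 ⟨w, hw, h⟩
              subst hw0
              rcases Metric.isOpen_iff.mp hW 0 hw with ⟨ε, hε, hb⟩
              have : ε / 2 ∈ W := hb (by
                simp only [Metric.mem_ball, Real.dist_eq, sub_zero]
                rw [abs_of_pos (by linarith)]
                linarith)
              exact h1 ⟨ε / 2, this, by simpa using by linarith⟩
            have : {x : X | (Φ x ∩ W).Nonempty} = ∅ := by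
              ext x
              simp [hWempty]
            rw [this]; exact isOpen_empty
      obtain ⟨f, hfc, hfm⟩ := hsel
      refine ⟨f ⁻¹' Set.Ioi 0, f ⁻¹' Set.Iio 0, isOpen_Ioi.preimage hfc,
        isOpen_Iio.preimage hfc, ?_, ?_, ?_⟩
      · intro x hx
        have := hfm x
        simp only [hΦ, if_pos hx] at this
        exact this
      · intro x hx
        have := hfm x
        simp only [hΦ, if_neg (hABm x hx), if_pos hx] at this
        exact this
      · exact Set.disjoint_left.2 fun x hx1 hx2 => by
          simp only [Set.mem_preimage, Set.mem_Ioi] at hx1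
          simp only [Set.mem_preimage, Set.mem_Iio] at hx2
          linarith
end

section
/- Let X be a metrizable topological space, A ⊆ X a closed subset, E a locally convex real topological vector space, and Φ ⊆ X × E an open relation with nonempty convex fibers. Then every continuous map g : A → E with g(a) ∈ Φ(a) for all a ∈ A extends to a continuous map f : X → E with f(x) ∈ Φ(x) for all x ∈ X. -/
open Set Function Filter Topology

/-- **Dugundji extension theorem** (for metric domains and locally convex codomains):
a continuous map on a nonempty closed subset of a metric space with values in a
locally convex real topological vector space extends continuously to the whole space. -/
theorem dugundji_extension_aux {X E : Type*} [MetricSpace X]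
    [AddCommGroup E] [Module ℝ E] [TopologicalSpace E]
    [IsTopologicalAddGroup E] [ContinuousSMul ℝ E] [LocallyConvexSpace ℝ E]
    {A : Set X} (hA : IsClosed A) (hAne : A.Nonempty)
    (g : A → E) (hg : Continuous g) :
    ∃ G : X → E, Continuous G ∧ ∀ a : A, G a = g a := by
  classical
  set Y := ↥(Aᶜ) with hYdef
  set r : Y → ℝ := fun i => Metric.infDist (i : X) A with hrdef
  have hr : ∀ i : Y, 0 < r i := fun i => (hA.notMem_iff_infDist_pos hAne).mp i.2
  set B : Y → Set Y := fun i => {z : Y | dist (z : X) (i : X) < r i / 2} with hBdef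
  have hBo : ∀ i, IsOpen (B i) := by
    intro i
    have : Continuous fun z : Y => dist (z : X) (i : X) :=
      (continuous_subtype_val).dist continuous_const
    exact isOpen_lt this continuous_const
  have hBc : (Set.univ : Set Y) ⊆ ⋃ i, B i := by
    intro z _
    refine Set.mem_iUnion.2 ⟨z, ?_⟩
    simp only [hBdef, Set.mem_setOf_eq, dist_self]
    linarith [hr z]
  obtain ⟨p, hp⟩ := PartitionOfUnity.exists_isSubordinate isClosed_univ B hBo hBc
  have ha : ∀ i : Y, ∃ y ∈ A, dist (i : X) y < 2 * r i := fun i =>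
    (Metric.infDist_lt_iff hAne).mp (by nlinarith [hr i])
  choose b hbA hbd using ha
  set c : Y → E := fun i => g ⟨b i, hbA i⟩ with hcdef
  set G' : Y → E := fun z => ∑ᶠ i, p i z • c i with hG'def
  have hG'c : Continuous G' :=
    hp.continuous_finsum_smul hBo fun i => continuousOn_const
  set G : X → E := fun x => if hx : x ∈ A then g ⟨x, hx⟩ else G' ⟨x, hx⟩ with hGdef
  have hGA : ∀ a : A, G a = g a := fun a => dif_pos a.2
  refine ⟨G, continuous_iff_continuousAt.2 fun x => ?_, hGA⟩
  by_cases hx : x ∈ A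
  · -- continuity at a point of `A`
    have key : ∀ W : Set E, W ∈ 𝓝 (g ⟨x, hx⟩) → Convex ℝ W → ∀ᶠ y in 𝓝 x, G y ∈ W := by
      intro W hW hWc
      have hpre : g ⁻¹' W ∈ 𝓝 (⟨x, hx⟩ : A) := hg.continuousAt.preimage_mem_nhds hW
      obtain ⟨ε, εpos, hε⟩ := Metric.mem_nhds_iff.mp hpre
      filter_upwards [Metric.ball_mem_nhds x (show (0:ℝ) < ε / 8 by positivity)] with y hy
      rw [Metric.mem_ball] at hy
      by_cases hyA : y ∈ A
      · have : G y = g ⟨y, hyA⟩ := dif_pos hyA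
        rw [this]
        refine hε ?_
        rw [Metric.mem_ball, Subtype.dist_eq]
        calc dist y x < ε / 8 := hy
          _ < ε := by linarith
      · have hGy : G y = G' ⟨y, hyA⟩ := dif_neg hyA
        rw [hGy, hG'def]
        refine p.finsum_smul_mem_convex (g := fun i _ => c i) (Set.mem_univ _)
          (fun i hi => ?_) hWc
        have hmem : (⟨y, hyA⟩ : Y) ∈ B i := hp i (subset_closure hi)
        have h1 : dist y (i : X) < r i / 2 := hmem
        have h2 : r i ≤ dist (i : X) x := Metric.infDist_le_dist_of_mem hx
        have h3 : dist (i : X) x ≤ dist (i : X) y + dist y x := dist_triangle _ _ _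
        have h1' : dist (i : X) y < r i / 2 := by rwa [dist_comm]
        have h4 : r i < 2 * dist y x := by linarith
        have h5 : dist (b i) x ≤ dist (b i) (i : X) + dist (i : X) y + dist y x :=
          dist_triangle4 _ _ _ _
        have h6 : dist (b i) (i : X) < 2 * r i := by rw [dist_comm]; exact hbd i
        have h7 : dist (b i) x < ε := by nlinarith
        refine hε ?_
        rw [Metric.mem_ball, Subtype.dist_eq]
        exact h7
    have hGx : G x = g ⟨x, hx⟩ := dif_pos hx
    rw [ContinuousAt, hGx]
    exact (LocallyConvexSpace.convex_basis (𝕜 := ℝ) (g ⟨x, hx⟩)).tendsto_right_iff.2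
      fun W hW => key W hW.1 hW.2
  · have hcont : ContinuousOn G Aᶜ := by
      rw [continuousOn_iff_continuous_restrict]
      have : Aᶜ.domRestrict G = G' := funext fun z => dif_neg z.2
      rw [this]
      exact hG'c
    exact hcont.continuousAt (hA.isOpen_compl.mem_nhds hx)

/-- Over a metrizable domain, every continuous partial selection on a closed set
for a convex-valued open relation into a locally convex space extends to a
continuous selection. -/
theorem stmt_13 {X E : Type*} [TopologicalSpace X] [T2Space X]
    [TopologicalSpace.MetrizableSpace X]
    [AddCommGroup E] [Module ℝ E] [TopologicalSpace E] [T2Space E]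
    [IsTopologicalAddGroup E] [ContinuousSMul ℝ E] [LocallyConvexSpace ℝ E]
    (A : Set X) (hA : IsClosed A)
    (Φ : Set (X × E)) (hΦ : IsOpen Φ)
    (hfib : ∀ x : X, {y : E | (x, y) ∈ Φ}.Nonempty ∧ Convex ℝ {y : E | (x, y) ∈ Φ})
    (g : A → E) (hg : Continuous g) (hsel : ∀ a : A, ((a : X), g a) ∈ Φ) :
    ∃ f : X → E, Continuous f ∧ (∀ a : A, f a = g a) ∧ ∀ x : X, (x, f x) ∈ Φ := by
  letI : MetricSpace X := TopologicalSpace.metrizableSpaceMetric X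
  -- a global continuous selection (Michael-type, via partitions of unity)
  obtain ⟨h, hh⟩ : ∃ h : C(X, E), ∀ x, h x ∈ {y : E | (x, y) ∈ Φ} := by
    refine exists_continuous_forall_mem_convex_of_local_const (fun x => (hfib x).2) fun x => ?_
    obtain ⟨y, hy⟩ := (hfib x).1
    have hopen : IsOpen {x' : X | (x', y) ∈ Φ} :=
      hΦ.preimage (continuous_id.prodMk continuous_const)
    exact ⟨y, hopen.mem_nhds hy⟩
  rcases A.eq_empty_or_nonempty with hAe | hAne
  · refine ⟨h, h.continuous, ?_, fun x => hh x⟩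
    rintro ⟨a, haA⟩
    exact absurd haA (by simp [hAe])
  obtain ⟨G, hGc, hGa⟩ := dugundji_extension_aux hA hAne g hg
  set V : Set X := {x | (x, G x) ∈ Φ} with hVdef
  have hVo : IsOpen V := hΦ.preimage (continuous_id.prodMk hGc)
  have hAV : A ⊆ V := fun a haA => by
    have := hsel ⟨a, haA⟩
    simpa [hVdef, hGa ⟨a, haA⟩] using this
  obtain ⟨φ, hφ0, hφ1, hφ01⟩ := exists_continuous_zero_one_of_isClosed
    hVo.isClosed_compl hA (disjoint_compl_left.mono_right hAV)
  refine ⟨fun x => φ x • G x + (1 - φ x) • h x, ?_, ?_, ?_⟩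
  · fun_prop
  · intro a
    have h1 : φ a = 1 := hφ1 a.2
    simp [h1, hGa a]
  · intro x
    by_cases hxV : x ∈ V
    · have hconv := (hfib x).2
      have h01 := hφ01 x
      exact hconv hxV (hh x) h01.1 (by linarith [h01.2]) (by ring)
    · have h0 : φ x = 0 := hφ0 hxV
      simpa [h0] using hh x
end

section
/- Let X be a countably paracompact normal space, A ⊆ X a closed subset, E a separable Banach space (or separable Fréchet space), and Φ ⊆ X × E an open relation with nonempty convex fibers. Then every continuous map g : A → E with g(a) ∈ Φ(a) for all a ∈ A extends to a continuous selection f : X → E for Φ. -/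
lemma combo_lt {a b u v c : ℝ} (ha : 0 ≤ a) (hb : 0 ≤ b) (hab : a + b = 1)
    (hu : u < c) (hv : v < c) : a * u + b * v < c := by
  rcases hb.eq_or_lt with hb0 | hb0
  · have ha1 : a = 1 := by linarith
    rw [← hb0, ha1]; linarith
  · have h3 : a * c + b * c = c := by rw [← add_mul, hab, one_mul]
    linarith [mul_le_mul_of_nonneg_left hu.le ha, mul_lt_mul_of_pos_left hv hb0]

/-- Global continuous selection for an open relation with nonempty convex fibers. -/
theorem key_sel {X E : Type*} [TopologicalSpace X] [NormalSpace X]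
    (hcp : CountablyParacompact X)
    [NormedAddCommGroup E] [NormedSpace ℝ E]
    [TopologicalSpace.SeparableSpace E]
    (Φ : Set (X × E)) (hΦ : IsOpen Φ)
    (hfib : ∀ x : X, {y : E | (x, y) ∈ Φ}.Nonempty ∧ Convex ℝ {y : E | (x, y) ∈ Φ}) :
    ∃ f : X → E, Continuous f ∧ ∀ x : X, (x, f x) ∈ Φ := by
  obtain ⟨u, hu⟩ : ∃ u : ℕ → E, DenseRange u :=
    ⟨TopologicalSpace.denseSeq E, TopologicalSpace.denseRange_denseSeq E⟩
  set U : ℕ → Set X := fun n => {x | (x, u n) ∈ Φ} with hU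
  have hUo : ∀ n, IsOpen (U n) := fun n =>
    hΦ.preimage (continuous_id.prodMk continuous_const)
  have hUc : (⋃ n, U n) = Set.univ := by
    ext x
    simp only [Set.mem_iUnion, Set.mem_univ, iff_true]
    have hfo : IsOpen {y : E | (x, y) ∈ Φ} :=
      hΦ.preimage (continuous_const.prodMk continuous_id)
    obtain ⟨n, hn⟩ := hu.exists_mem_open hfo (hfib x).1
    exact ⟨n, hn⟩
  obtain ⟨V, hVo, hVc, hVU, hVlf⟩ := hcp U hUo hUc
  obtain ⟨b, hb⟩ := BumpCovering.exists_isSubordinate_of_locallyFinite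
    (s := Set.univ) isClosed_univ V hVo hVlf (by rw [hVc])
  set ρ := b.toPartitionOfUnity with hρdef
  have hρ : ρ.IsSubordinate V := hb.toPartitionOfUnity
  refine ⟨fun x => ∑ᶠ n, ρ n x • u n, ?_, ?_⟩
  · exact hρ.continuous_finsum_smul hVo (g := fun n _ => u n)
      (fun i => continuousOn_const)
  · intro x
    have heq : ∑ i ∈ ρ.finsupport x, ρ i x • u i = ∑ᶠ i, ρ i x • u i :=
      ρ.sum_finsupport_smul_eq_finsum (fun n _ => u n)
    rw [show (x, ∑ᶠ n, ρ n x • u n) ∈ Φ ↔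
        (∑ᶠ n, ρ n x • u n) ∈ {y : E | (x, y) ∈ Φ} from Iff.rfl, ← heq]
    refine (hfib x).2.sum_mem (fun i _ => ρ.nonneg i x)
      (ρ.sum_finsupport (Set.mem_univ x)) (fun i hi => ?_)
    have hx : x ∈ Function.support (ρ i) := by
      rw [ρ.mem_finsupport] at hi; exact hi
    exact hVU i (hρ i (subset_tsupport _ hx))

/-- The graph relation used in the bounded approximation step is open and has
nonempty convex fibers. -/
theorem norm_step {X E : Type*} [TopologicalSpace X]
    [NormedAddCommGroup E] [NormedSpace ℝ E]
    (A : Set X) (hA : IsClosed A) (w : A → E) (hw : Continuous w) {ε B : ℝ} (hε : 0 < ε) (hB : 0 < B)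
    (hwB : ∀ a : A, ‖w a‖ < B) :
    IsOpen {p : X × E | ‖p.2‖ < B ∧ ∀ ha : p.1 ∈ A, ‖p.2 - w ⟨p.1, ha⟩‖ < ε} ∧
    ∀ x : X, ({y : E | ‖y‖ < B ∧ ∀ ha : x ∈ A, ‖y - w ⟨x, ha⟩‖ < ε}).Nonempty ∧
      Convex ℝ {y : E | ‖y‖ < B ∧ ∀ ha : x ∈ A, ‖y - w ⟨x, ha⟩‖ < ε} := by
  constructor
  · rw [isOpen_iff_forall_mem_open]
    rintro ⟨x, y⟩ ⟨hyB, hyA⟩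
    by_cases hxA : x ∈ A
    · set d := ‖y - w ⟨x, hxA⟩‖ with hd
      have hdε : d < ε := hyA hxA
      set δ : ℝ := min ((ε - d) / 2) (B - ‖y‖) with hδ
      have hδ0 : 0 < δ := lt_min (by linarith) (by linarith)
      -- open set in X from continuity of w at ⟨x, hxA⟩
      have hopen : IsOpen (w ⁻¹' Metric.ball (w ⟨x, hxA⟩) ((ε - d) / 2)) :=
        Metric.isOpen_ball.preimage hw
      obtain ⟨O, hOopen, hOeq⟩ := isOpen_induced_iff.mp hopen
      have hxO : x ∈ O := by
        have hed : (0:ℝ) < (ε - d)/2 := by linarith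
        have : (⟨x, hxA⟩ : A) ∈ w ⁻¹' Metric.ball (w ⟨x, hxA⟩) ((ε - d) / 2) := by
          simpa [Metric.mem_ball] using hed
        rw [← hOeq] at this; exact this
      refine ⟨O ×ˢ Metric.ball y δ, ?_, hOopen.prod Metric.isOpen_ball, ?_⟩
      · rintro ⟨x', y'⟩ ⟨hx'O, hy'⟩
        rw [Metric.mem_ball, dist_eq_norm] at hy'
        constructor
        · calc ‖y'‖ ≤ ‖y‖ + ‖y' - y‖ := norm_le_insert' _ _
            _ < ‖y‖ + δ := by linarith
            _ ≤ B := by have := min_le_right ((ε - d) / 2) (B - ‖y‖); rw [← hδ] at this; linarith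
        · intro hx'A
          have hwx' : ‖w ⟨x', hx'A⟩ - w ⟨x, hxA⟩‖ < (ε - d) / 2 := by
            have : (⟨x', hx'A⟩ : A) ∈ Subtype.val ⁻¹' O := hx'O
            rw [hOeq, Set.mem_preimage, Metric.mem_ball, dist_eq_norm] at this
            exact this
          have hδle : δ ≤ (ε - d) / 2 := min_le_left _ _
          calc ‖y' - w ⟨x', hx'A⟩‖
              ≤ ‖y' - y‖ + ‖y - w ⟨x, hxA⟩‖ + ‖w ⟨x, hxA⟩ - w ⟨x', hx'A⟩‖ :=
                norm_sub_le_norm_sub_add_norm_sub _ _ _ |>.trans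
                  (by gcongr; exact norm_sub_le_norm_sub_add_norm_sub _ _ _)
            _ < δ + d + (ε - d) / 2 := by rw [norm_sub_rev (w ⟨x,hxA⟩)]; linarith
            _ ≤ ε := by linarith
      · exact ⟨hxO, Metric.mem_ball_self hδ0⟩
    · refine ⟨Aᶜ ×ˢ Metric.ball 0 B, ?_, hA.isOpen_compl.prod Metric.isOpen_ball, ?_⟩
      · rintro ⟨x', y'⟩ ⟨hx', hy'⟩
        rw [Metric.mem_ball, dist_zero_right] at hy'
        exact ⟨hy', fun ha => absurd ha hx'⟩
      · exact ⟨hxA, by rwa [Metric.mem_ball, dist_zero_right]⟩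
  · intro x
    constructor
    · by_cases hxA : x ∈ A
      · exact ⟨w ⟨x, hxA⟩, hwB _, fun ha => by simp [hε]⟩
      · exact ⟨0, by simpa using hB, fun ha => absurd ha hxA⟩
    · rintro y1 ⟨h1B, h1A⟩ y2 ⟨h2B, h2A⟩ a b ha hb hab
      constructor
      · calc ‖a • y1 + b • y2‖ ≤ a * ‖y1‖ + b * ‖y2‖ := by
              refine (norm_add_le _ _).trans ?_
              rw [norm_smul, norm_smul, Real.norm_of_nonneg ha, Real.norm_of_nonneg hb]
          _ < B := combo_lt ha hb hab h1B h2B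
      · intro hxA
        have h1 := h1A hxA
        have h2 := h2A hxA
        have : a • (y1 - w ⟨x, hxA⟩) + b • (y2 - w ⟨x, hxA⟩) = a • y1 + b • y2 - w ⟨x, hxA⟩ := by
          rw [smul_sub, smul_sub, sub_add_sub_comm, ← add_smul, hab, one_smul]
        rw [← this]
        calc ‖a • (y1 - w ⟨x, hxA⟩) + b • (y2 - w ⟨x, hxA⟩)‖
            ≤ a * ‖y1 - w ⟨x, hxA⟩‖ + b * ‖y2 - w ⟨x, hxA⟩‖ := by
              refine (norm_add_le _ _).trans ?_
              rw [norm_smul, norm_smul, Real.norm_of_nonneg ha, Real.norm_of_nonneg hb]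
          _ < ε := combo_lt ha hb hab h1 h2

section

variable {X E : Type*} [TopologicalSpace X] [NormalSpace X]
    [NormedAddCommGroup E] [NormedSpace ℝ E] [TopologicalSpace.SeparableSpace E]

/-- Bounded approximation step. -/
theorem approx (hcp : CountablyParacompact X)
    (A : Set X) (hA : IsClosed A) (w : A → E) (hw : Continuous w) {ε B : ℝ}
    (hε : 0 < ε) (hB : 0 < B) (hwB : ∀ a : A, ‖w a‖ < B) :
    ∃ v : X → E, Continuous v ∧ (∀ x, ‖v x‖ < B) ∧ ∀ a : A, ‖w a - v a‖ < ε := by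
  obtain ⟨hop, hfib⟩ := norm_step A hA w hw hε hB hwB
  obtain ⟨v, hv, hsel⟩ := key_sel hcp _ hop hfib
  exact ⟨v, hv, fun x => (hsel x).1, fun a => by
    have := (hsel a).2 a.2
    rwa [norm_sub_rev] at this⟩

/-- Unbounded approximation step. -/
theorem approx0 (hcp : CountablyParacompact X)
    (A : Set X) (hA : IsClosed A) (w : A → E) (hw : Continuous w) {ε : ℝ}
    (hε : 0 < ε) :
    ∃ v : X → E, Continuous v ∧ ∀ a : A, ‖w a - v a‖ < ε := by
  set Ψ : Set (X × E) := {p | ∀ ha : p.1 ∈ A, ‖p.2 - w ⟨p.1, ha⟩‖ < ε} with hΨ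
  have hop : IsOpen Ψ := by
    rw [isOpen_iff_forall_mem_open]
    rintro ⟨x, y⟩ hyA
    by_cases hxA : x ∈ A
    · set d := ‖y - w ⟨x, hxA⟩‖ with hd
      have hdε : d < ε := hyA hxA
      have hed : (0:ℝ) < (ε - d) / 2 := by linarith
      have hopen : IsOpen (w ⁻¹' Metric.ball (w ⟨x, hxA⟩) ((ε - d) / 2)) :=
        Metric.isOpen_ball.preimage hw
      obtain ⟨O, hOopen, hOeq⟩ := isOpen_induced_iff.mp hopen
      have hxO : x ∈ O := by
        have : (⟨x, hxA⟩ : A) ∈ w ⁻¹' Metric.ball (w ⟨x, hxA⟩) ((ε - d) / 2) := by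
          simpa [Metric.mem_ball] using hed
        rw [← hOeq] at this; exact this
      refine ⟨O ×ˢ Metric.ball y ((ε - d) / 2), ?_, hOopen.prod Metric.isOpen_ball,
        hxO, Metric.mem_ball_self hed⟩
      rintro ⟨x', y'⟩ ⟨hx'O, hy'⟩ hx'A
      rw [Metric.mem_ball, dist_eq_norm] at hy'
      have hwx' : ‖w ⟨x', hx'A⟩ - w ⟨x, hxA⟩‖ < (ε - d) / 2 := by
        have : (⟨x', hx'A⟩ : A) ∈ Subtype.val ⁻¹' O := hx'O
        rw [hOeq, Set.mem_preimage, Metric.mem_ball, dist_eq_norm] at this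
        exact this
      calc ‖y' - w ⟨x', hx'A⟩‖
          ≤ ‖y' - y‖ + ‖y - w ⟨x, hxA⟩‖ + ‖w ⟨x, hxA⟩ - w ⟨x', hx'A⟩‖ :=
            norm_sub_le_norm_sub_add_norm_sub _ _ _ |>.trans
              (by gcongr; exact norm_sub_le_norm_sub_add_norm_sub _ _ _)
        _ < (ε - d) / 2 + d + (ε - d) / 2 := by rw [norm_sub_rev (w ⟨x, hxA⟩)]; linarith
        _ ≤ ε := by linarith
    · exact ⟨Aᶜ ×ˢ Set.univ, fun p hp ha => absurd ha hp.1,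
        hA.isOpen_compl.prod isOpen_univ, hxA, Set.mem_univ _⟩
  have hfib : ∀ x : X, ({y : E | (x, y) ∈ Ψ}).Nonempty ∧ Convex ℝ {y : E | (x, y) ∈ Ψ} := by
    intro x
    constructor
    · by_cases hxA : x ∈ A
      · exact ⟨w ⟨x, hxA⟩, fun ha => by simp [hε]⟩
      · exact ⟨0, fun ha => absurd ha hxA⟩
    · intro y1 h1A y2 h2A a b ha hb hab hxA
      have h1 := h1A hxA
      have h2 := h2A hxA
      have hkey : a • (y1 - w ⟨x, hxA⟩) + b • (y2 - w ⟨x, hxA⟩)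
          = a • y1 + b • y2 - w ⟨x, hxA⟩ := by
        rw [smul_sub, smul_sub, sub_add_sub_comm, ← add_smul, hab, one_smul]
      rw [show ((x, a • y1 + b • y2).2 : E) = a • y1 + b • y2 from rfl, ← hkey]
      calc ‖a • (y1 - w ⟨x, hxA⟩) + b • (y2 - w ⟨x, hxA⟩)‖
          ≤ a * ‖y1 - w ⟨x, hxA⟩‖ + b * ‖y2 - w ⟨x, hxA⟩‖ := by
            refine (norm_add_le _ _).trans ?_
            rw [norm_smul, norm_smul, Real.norm_of_nonneg ha, Real.norm_of_nonneg hb]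
        _ < ε := combo_lt ha hb hab h1 h2
  obtain ⟨v, hv, hsel⟩ := key_sel hcp Ψ hop hfib
  exact ⟨v, hv, fun a => by have := hsel a a.2; rwa [norm_sub_rev] at this⟩

/-- Tietze-type extension. -/
theorem tietze_ext (hcp : CountablyParacompact X) [CompleteSpace E] [T2Space X]
    (A : Set X) (hA : IsClosed A) (g : A → E) (hg : Continuous g) :
    ∃ h : X → E, Continuous h ∧ ∀ a : A, h a = g a := by
  obtain ⟨v0, hv0c, hv0⟩ := approx0 hcp A hA g hg one_pos
  -- recursive improvement
  have hrec : ∀ n : ℕ, ∀ S : X → E, Continuous S → (∀ a : A, ‖g a - S a‖ < (1/2 : ℝ)^n) →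
      ∃ S' : X → E, Continuous S' ∧ (∀ a : A, ‖g a - S' a‖ < (1/2 : ℝ)^(n+1)) ∧
        ∀ x, ‖S' x - S x‖ ≤ (1/2 : ℝ)^n := by
    intro n S hSc hSr
    have hcont : Continuous (fun a : A => g a - S a) := hg.sub (hSc.comp continuous_subtype_val)
    obtain ⟨v, hvc, hvB, hvr⟩ := approx hcp A hA (fun a : A => g a - S a) hcont
      (pow_pos one_half_pos (n+1)) (pow_pos one_half_pos n) hSr
    refine ⟨fun x => S x + v x, hSc.add hvc, fun a => ?_, fun x => ?_⟩
    · have := hvr a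
      simpa [sub_sub] using this
    · simpa using (hvB x).le
  choose F hFc hFr hFd using hrec
  -- the sequence of partial approximations
  let seq : ∀ n : ℕ, {S : X → E // Continuous S ∧ ∀ a : A, ‖g a - S a‖ < (1/2 : ℝ)^n} := fun n =>
    Nat.rec (motive := fun n => {S : X → E // Continuous S ∧ ∀ a : A, ‖g a - S a‖ < (1/2 : ℝ)^n})
      ⟨v0, hv0c, fun a => by simpa using hv0 a⟩
      (fun n prev => ⟨F n prev.1 prev.2.1 prev.2.2, hFc n prev.1 prev.2.1 prev.2.2,
        hFr n prev.1 prev.2.1 prev.2.2⟩) n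
  have hdiff : ∀ n x, ‖(seq (n+1)).1 x - (seq n).1 x‖ ≤ (1/2 : ℝ)^n := fun n x =>
    hFd n (seq n).1 (seq n).2.1 (seq n).2.2 x
  -- the limit
  set d : ℕ → X → E := fun n x => (seq (n+1)).1 x - (seq n).1 x with hd
  have hdc : ∀ n, Continuous (d n) := fun n => ((seq (n+1)).2.1).sub ((seq n).2.1)
  have hsum : Summable (fun n : ℕ => (1/2 : ℝ)^n) := summable_geometric_two
  have hdb : ∀ n x, ‖d n x‖ ≤ (1/2 : ℝ)^n := fun n x => hdiff n x
  refine ⟨fun x => (seq 0).1 x + ∑' n, d n x, ?_, ?_⟩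
  · exact ((seq 0).2.1).add (continuous_tsum hdc hsum hdb)
  · intro a
    have hsa : Summable (fun n => d n a) :=
      Summable.of_norm_bounded hsum (fun n => hdb n a)
    have h1 : Filter.Tendsto (fun n => (seq n).1 a) Filter.atTop
        (nhds ((seq 0).1 a + ∑' n, d n a)) := by
      have hT := hsa.hasSum.tendsto_sum_nat
      have heq : ∀ n, ∑ k ∈ Finset.range n, d k a = (seq n).1 a - (seq 0).1 a := by
        intro n
        exact Finset.sum_range_sub (fun k => (seq k).1 a) n
      rw [show (fun n => ∑ k ∈ Finset.range n, d k a)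
          = fun n => (seq n).1 a - (seq 0).1 a from funext heq] at hT
      have := hT.const_add ((seq 0).1 a)
      simpa using this
    have h2 : Filter.Tendsto (fun n => (seq n).1 a) Filter.atTop (nhds (g a)) := by
      rw [tendsto_iff_norm_sub_tendsto_zero]
      refine squeeze_zero (g := fun n => (1/2 : ℝ)^n) (fun n => norm_nonneg _) (fun n => ?_) ?_
      · exact (by rw [norm_sub_rev]; exact ((seq n).2.2 a).le)
      · exact tendsto_pow_atTop_nhds_zero_of_lt_one (by norm_num) (by norm_num)
    exact tendsto_nhds_unique h1 h2

end

/-- Over a countably paracompact normal domain, every continuous partial selection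
on a closed set for a convex-valued open relation into a separable Banach space
extends to a continuous selection. -/
theorem stmt_14 {X E : Type*} [TopologicalSpace X] [T2Space X] [NormalSpace X]
    (hcp : CountablyParacompact X)
    [NormedAddCommGroup E] [NormedSpace ℝ E] [CompleteSpace E]
    [TopologicalSpace.SeparableSpace E]
    (A : Set X) (hA : IsClosed A)
    (Φ : Set (X × E)) (hΦ : IsOpen Φ)
    (hfib : ∀ x : X, {y : E | (x, y) ∈ Φ}.Nonempty ∧ Convex ℝ {y : E | (x, y) ∈ Φ})
    (g : A → E) (hg : Continuous g) (hsel : ∀ a : A, ((a : X), g a) ∈ Φ) :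
    ∃ f : X → E, Continuous f ∧ (∀ a : A, f a = g a) ∧ ∀ x : X, (x, f x) ∈ Φ := by
  obtain ⟨h, hhc, hha⟩ := tietze_ext hcp A hA g hg
  set W : Set X := {x | (x, h x) ∈ Φ} with hW
  have hWo : IsOpen W := hΦ.preimage (continuous_id.prodMk hhc)
  have hAW : A ⊆ W := by
    intro x hx
    show (x, h x) ∈ Φ
    rw [show h x = g ⟨x, hx⟩ from hha ⟨x, hx⟩]
    exact hsel ⟨x, hx⟩
  obtain ⟨f₀, hf₀c, hf₀sel⟩ := key_sel hcp Φ hΦ hfib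
  obtain ⟨u, hu0, hu1, hu01⟩ := exists_continuous_zero_one_of_isClosed
    hWo.isClosed_compl hA (by
      rw [Set.disjoint_left]; intro x hx hxA; exact hx (hAW hxA))
  refine ⟨fun x => u x • h x + (1 - u x) • f₀ x, ?_, ?_, ?_⟩
  · exact (u.continuous.smul hhc).add ((continuous_const.sub u.continuous).smul hf₀c)
  · intro a
    have h1 : u a = 1 := hu1 a.2
    show u a • h (a : X) + (1 - u a) • f₀ (a : X) = g a
    rw [h1, hha a]
    simp
  · intro x
    by_cases hxW : x ∈ W
    · have hmem1 : h x ∈ {y : E | (x, y) ∈ Φ} := hxW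
      have hmem2 : f₀ x ∈ {y : E | (x, y) ∈ Φ} := hf₀sel x
      exact (hfib x).2 hmem1 hmem2 (hu01 x).1 (by linarith [(hu01 x).2]) (by ring)
    · have h0 : u x = 0 := hu0 hxW
      have : u x • h x + (1 - u x) • f₀ x = f₀ x := by simp [h0]
      rw [show ((x, u x • h x + (1 - u x) • f₀ x) : X × E)
          = (x, f₀ x) from by rw [this]]
      exact hf₀sel x
end

section
/- Let λ be an infinite ordinal equipped with its order topology, X a topological space, and suppose Ω ⊆ X × λ is a relation whose fibers Ω(x) ⊆ λ are nonempty sets of isolated points of λ, which is increasing (α ∈ Ω(x), α ≤ β isolated implies β ∈ Ω(x); equivalently Ω⁻¹(α) ⊆ Ω⁻¹(β) for α < β), and such that each Ω⁻¹(α) = {x : α ∈ Ω(x)} is open in X and ⋃_α Ω⁻¹(α) = X. Then the pointwise closure relation Ω̄, defined by Ω̄(x) = closure of Ω(x) in λ, is an open subset of X × λ and is increasing. -/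
/-- In a well-ordered set with the order topology, any element covering another
element is isolated. -/
lemma covBy_isolated {L : Type*} [LinearOrder L] [TopologicalSpace L] [OrderTopology L]
    [WellFoundedLT L] {a b : L} (h : a ⋖ b) : IsOpen ({b} : Set L) := by
  rcases Set.eq_empty_or_nonempty (Set.Ioi b) with he | hne
  · have hb : ({b} : Set L) = Set.Ioi a := by
      ext z
      simp only [Set.mem_singleton_iff, Set.mem_Ioi]
      constructor
      · rintro rfl; exact h.1
      · intro hz
        have h1 : ¬ z < b := h.2 hz
        have h2 : ¬ b < z := by
          intro hbz
          have : z ∈ Set.Ioi b := hbz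
          rw [he] at this
          exact this
        exact le_antisymm (not_lt.mp h2) (not_lt.mp h1)
    rw [hb]; exact isOpen_Ioi
  · obtain ⟨ε, hε, hεmin⟩ := wellFounded_lt.has_min (Set.Ioi b) hne
    have hb : ({b} : Set L) = Set.Ioo a ε := by
      ext z
      simp only [Set.mem_singleton_iff, Set.mem_Ioo]
      constructor
      · rintro rfl; exact ⟨h.1, hε⟩
      · rintro ⟨h1, h2⟩
        have h3 : ¬ z < b := h.2 h1
        have h4 : ¬ b < z := fun hbz => hεmin z hbz h2
        exact le_antisymm (not_lt.mp h4) (not_lt.mp h3)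
    rw [hb]; exact isOpen_Ioo

/-- For an increasing open cover `Ω` of `X` indexed by the isolated points of an
infinite ordinal (modelled as an infinite well-ordered set `L` with its order
topology), the pointwise closure relation is an increasing open relation. -/
theorem stmt_15 {X L : Type*} [TopologicalSpace X]
    [LinearOrder L] [TopologicalSpace L] [OrderTopology L] [WellFoundedLT L] [Infinite L]
    (Ω : X → Set L)
    (hne : ∀ x, (Ω x).Nonempty)
    (hiso : ∀ x : X, ∀ α ∈ Ω x, IsOpen ({α} : Set L))
    (hinc : ∀ x : X, ∀ α ∈ Ω x, ∀ β : L, α ≤ β → IsOpen ({β} : Set L) → β ∈ Ω x)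
    (hop : ∀ α : L, IsOpen {x : X | α ∈ Ω x}) :
    IsOpen {p : X × L | p.2 ∈ closure (Ω p.1)} ∧
      ∀ x : X, ∀ α ∈ closure (Ω x), ∀ β : L, α ≤ β → β ∈ closure (Ω x) := by
  -- Key: if `α ∈ Ω x` then every `β ≥ α` lies in the closure of `Ω x`.
  have key : ∀ x : X, ∀ α ∈ Ω x, ∀ β : L, α ≤ β → β ∈ closure (Ω x) := by
    intro x α hα β hαβ
    rcases eq_or_lt_of_le hαβ with rfl | hlt
    · exact subset_closure hα
    by_cases hβ : IsOpen ({β} : Set L)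
    · exact subset_closure (hinc x α hα β hαβ hβ)
    · rw [mem_closure_iff]
      intro U hU hβU
      obtain ⟨γ, hγβ, hIoc⟩ := exists_Ioc_subset_of_mem_nhds (hU.mem_nhds hβU) ⟨α, hlt⟩
      set γ' := max γ α with hγ'def
      have hγ'β : γ' < β := max_lt hγβ hlt
      obtain ⟨δ, hδmem, hδmin⟩ := wellFounded_lt.has_min (Set.Ioi γ') ⟨β, hγ'β⟩
      have hcov : γ' ⋖ δ := ⟨hδmem, fun c hc hc' => hδmin c hc hc'⟩
      have hδiso : IsOpen ({δ} : Set L) := covBy_isolated hcov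
      have hδβ : δ < β := by
        rcases lt_or_eq_of_le (not_lt.mp (hδmin β hγ'β)) with h | h
        · exact h
        · exact absurd (h ▸ hδiso) hβ
      have hδΩ : δ ∈ Ω x := hinc x α hα δ (le_of_lt (lt_of_le_of_lt (le_max_right γ α) hδmem)) hδiso
      exact ⟨δ, hIoc ⟨lt_of_le_of_lt (le_max_left γ α) hδmem, hδβ.le⟩, hδΩ⟩
  -- Every point of `closure (Ω x)` lies above the minimum of `Ω x`.
  have hmin : ∀ x : X, ∃ α ∈ Ω x, ∀ β ∈ closure (Ω x), α ≤ β := by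
    intro x
    obtain ⟨α, hα, hα'⟩ := wellFounded_lt.has_min (Ω x) (hne x)
    refine ⟨α, hα, fun β hβ => ?_⟩
    have hsub : closure (Ω x) ⊆ Set.Ici α :=
      closure_minimal (fun z hz => not_lt.mp (hα' z hz)) isClosed_Ici
    exact hsub hβ
  constructor
  · rw [isOpen_iff_forall_mem_open]
    rintro ⟨x, β⟩ hp
    obtain ⟨α, hα, hαmin⟩ := hmin x
    have hIci : IsOpen (Set.Ici α) := by
      have : Set.Ici α = {α} ∪ Set.Ioi α := by
        ext z
        simp only [Set.mem_Ici, Set.mem_union, Set.mem_singleton_iff, Set.mem_Ioi]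
        constructor
        · intro h; rcases eq_or_lt_of_le h with h | h
          · exact Or.inl h.symm
          · exact Or.inr h
        · rintro (rfl | h); exacts [le_refl _, h.le]
      rw [this]
      exact (hiso x α hα).union isOpen_Ioi
    refine ⟨{y | α ∈ Ω y} ×ˢ Set.Ici α, ?_, (hop α).prod hIci, hα, hαmin β hp⟩
    rintro ⟨y, β'⟩ ⟨hy, hβ'⟩
    exact key y α hy β' hβ'
  · intro x α hα β hβ
    obtain ⟨α₀, h₀, h₀min⟩ := hmin x
    exact key x α₀ h₀ β (le_trans (h₀min α hα) hβ)
end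

section
/- Let X be a τ-paracompact normal topological space and Y a compact Hausdorff space of topological weight at most τ. Then the product X × Y is normal. -/
universe u

open Set TopologicalSpace

/-- A space is `τ`-paracompact if every open cover of cardinality at most `τ`
has a locally finite open refinement. -/
def TauParacompact (X : Type u) [TopologicalSpace X] (τ : Cardinal.{u}) : Prop :=
  ∀ 𝒰 : Set (Set X), (∀ U ∈ 𝒰, IsOpen U) → ⋃₀ 𝒰 = Set.univ → Cardinal.mk 𝒰 ≤ τ →
    ∃ 𝒱 : Set (Set X), (∀ V ∈ 𝒱, IsOpen V) ∧ ⋃₀ 𝒱 = Set.univ ∧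
      (∀ V ∈ 𝒱, ∃ U ∈ 𝒰, V ⊆ U) ∧
      ∀ x : X, ∃ N ∈ nhds x, {V ∈ 𝒱 | (V ∩ N).Nonempty}.Finite

/-- The set of points of `X` whose fiber over a compact `K ⊆ Y` avoids a closed
set `C ⊆ X × Y` is open. -/
lemma tube_open {X Y : Type u} [TopologicalSpace X] [TopologicalSpace Y]
    {K : Set Y} (hK : IsCompact K) {C : Set (X × Y)} (hC : IsClosed C) :
    IsOpen {x : X | ∀ y ∈ K, (x, y) ∉ C} := by
  rw [isOpen_iff_forall_mem_open]
  intro x hx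
  have hsub : ({x} : Set X) ×ˢ K ⊆ Cᶜ := by
    rintro ⟨a, c⟩ ⟨ha, hc⟩
    rcases Set.mem_singleton_iff.mp ha with rfl
    exact hx c hc
  obtain ⟨U, V, hU, _, hxU, hKV, hUV⟩ :=
    generalized_tube_lemma isCompact_singleton hK hC.isOpen_compl hsub
  exact ⟨U, fun a ha y hy => hUV ⟨ha, hKV hy⟩, hU, hxU rfl⟩

/-- Morita: the product of a `τ`-paracompact normal space with a compact Hausdorff
space of weight at most `τ` is normal. -/
theorem stmt_16 {X Y : Type u} [TopologicalSpace X] [T2Space X] [NormalSpace X]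
    [TopologicalSpace Y] [T2Space Y] [CompactSpace Y]
    (τ : Cardinal.{u}) (hτ : Cardinal.aleph0 ≤ τ)
    (hX : TauParacompact X τ)
    (hw : ∃ B : Set (Set Y), TopologicalSpace.IsTopologicalBasis B ∧ Cardinal.mk B ≤ τ) :
    NormalSpace (X × Y) := by
  obtain ⟨B, hB, hBcard⟩ := hw
  constructor
  intro F G hF hG hFG
  classical
  -- `D b e` : points of `X` whose fiber over `closure b` avoids `F` (if `e`) or `G`.
  set D : Set Y → Bool → Set X :=
    fun b e => {x | ∀ y ∈ closure b, (x, y) ∉ cond e F G} with hDdef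
  have hCclosed : ∀ e : Bool, IsClosed (cond e F G) := by
    intro e; cases e
    · exact hG
    · exact hF
  have hD : ∀ b e, IsOpen (D b e) :=
    fun b e => tube_open (isClosed_closure.isCompact) (hCclosed e)
  set W : Finset (↥B × Bool) → Set X := fun σ => ⋂ p ∈ σ, D (↑p.1) p.2 with hWdef
  set S : Set (Finset (↥B × Bool)) :=
    {σ | (⋃ p ∈ σ, (↑p.1 : Set Y)) = univ} with hSdef
  have hWopen : ∀ σ, IsOpen (W σ) := fun σ => isOpen_biInter_finset fun p _ => hD _ _
  -- The sets `W σ`, `σ ∈ S`, cover `X`.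
  have hcover : ∀ x : X, ∃ σ ∈ S, x ∈ W σ := by
    intro x
    have key : ∀ y : Y, ∃ (b : Set Y) (e : Bool) (U : Set X),
        b ∈ B ∧ y ∈ b ∧ IsOpen U ∧ x ∈ U ∧ U ⊆ D b e := by
      intro y
      obtain ⟨e, he⟩ : ∃ e : Bool, (x, y) ∉ cond e F G := by
        by_cases hFxy : (x, y) ∈ F
        · exact ⟨false, Set.disjoint_left.mp hFG hFxy⟩
        · exact ⟨true, hFxy⟩
      obtain ⟨U, O, hU, hO, hxU, hyO, hUO⟩ :=
        isOpen_prod_iff.mp (hCclosed e).isOpen_compl x y he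
      obtain ⟨b, hbB, hyb, hbO⟩ := hB.exists_closure_subset (hO.mem_nhds hyO)
      exact ⟨b, e, U, hbB, hyb, hU, hxU, fun a ha y' hy' => hUO ⟨ha, hbO hy'⟩⟩
    choose b e U hbB hyb hUo hxU hUD using key
    obtain ⟨t, ht⟩ := isCompact_univ.elim_finite_subcover b
      (fun y => hB.isOpen (hbB y)) (fun y _ => mem_iUnion.2 ⟨y, hyb y⟩)
    refine ⟨t.image (fun y => ((⟨b y, hbB y⟩ : ↥B), e y)), ?_, ?_⟩
    · apply Set.eq_univ_of_univ_subset
      intro z hz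
      obtain ⟨y, hyt, hzy⟩ := mem_iUnion₂.mp (ht hz)
      exact mem_iUnion₂.mpr ⟨(⟨b y, hbB y⟩, e y), Finset.mem_image_of_mem _ hyt, hzy⟩
    · apply mem_iInter₂.mpr
      intro p hp
      obtain ⟨y, hyt, rfl⟩ := Finset.mem_image.mp hp
      exact hUD y (hxU y)
  -- Cardinality bound for the cover.
  have hcard : Cardinal.mk (W '' S) ≤ τ := by
    refine Cardinal.mk_image_le.trans ((Cardinal.mk_set_le S).trans ?_)
    rcases finite_or_infinite (↥B × Bool) with h | h
    · exact le_trans Cardinal.mk_le_aleph0 hτ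
    · rw [Cardinal.mk_finset_of_infinite]
      have hb2 : Cardinal.lift.{u} (Cardinal.mk Bool) ≤ τ := by
        refine le_trans ?_ hτ
        rw [Cardinal.mk_bool]
        simpa using (Cardinal.nat_lt_aleph0 2).le
      have h2 : Cardinal.mk (↥B × Bool) ≤ τ * τ := by
        rw [Cardinal.mk_prod]
        exact mul_le_mul' (by simpa using hBcard) hb2
      exact h2.trans (le_of_eq (Cardinal.mul_eq_self hτ))
  -- Apply τ-paracompactness.
  obtain ⟨𝒱, h𝒱o, h𝒱U, h𝒱ref, h𝒱lf⟩ := hX (W '' S)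
    (by rintro _ ⟨σ, _, rfl⟩; exact hWopen σ)
    (by
      apply Set.eq_univ_of_univ_subset
      intro x _
      obtain ⟨σ, hσ, hx⟩ := hcover x
      exact ⟨W σ, ⟨σ, hσ, rfl⟩, hx⟩) hcard
  -- Choose indices for refinement members.
  have hsel : ∀ V : ↥𝒱, ∃ σ, σ ∈ S ∧ (V : Set X) ⊆ W σ := by
    rintro ⟨V, hV⟩
    obtain ⟨U', hU', hVU⟩ := h𝒱ref V hV
    obtain ⟨σ, hσ, rfl⟩ := hU'
    exact ⟨σ, hσ, hVU⟩
  choose σV hσS hVW using hsel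
  -- Shrink the locally finite cover.
  have huf : ∀ x : X, {i : ↥𝒱 | x ∈ (i : Set X)}.Finite := by
    intro x
    obtain ⟨N, hN, hfin⟩ := h𝒱lf x
    apply Set.Finite.of_finite_image (f := Subtype.val) ?_ Subtype.val_injective.injOn
    apply hfin.subset
    rintro _ ⟨⟨V, hV⟩, hxV, rfl⟩
    exact ⟨hV, ⟨x, hxV, mem_of_mem_nhds hN⟩⟩
  have hUeq : ⋃ i : ↥𝒱, (i : Set X) = univ := by
    rw [← Set.sUnion_eq_iUnion]; exact h𝒱U
  obtain ⟨v, hvU, hvo, hvcl⟩ :=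
    exists_iUnion_eq_closure_subset (fun i : ↥𝒱 => h𝒱o i i.2) huf hUeq
  have hvsub : ∀ i : ↥𝒱, v i ⊆ (i : Set X) := fun i => subset_closure.trans (hvcl i)
  -- The separating open set around `G`.
  let ι2 := Σ V : ↥𝒱, {p : ↥B × Bool // p ∈ σV V ∧ p.2 = true}
  let f : ι2 → Set (X × Y) := fun i => v i.1 ×ˢ (↑(i.2.1.1) : Set Y)
  have hfin2 : ∀ (N : Set X), {V : ↥𝒱 | ((V : Set X) ∩ N).Nonempty}.Finite →
      {i : ι2 | ((i.1 : Set X) ∩ N).Nonempty}.Finite := by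
    intro N hT
    have hsub : {i : ι2 | ((i.1 : Set X) ∩ N).Nonempty} ⊆
        ⋃ V ∈ {V : ↥𝒱 | ((V : Set X) ∩ N).Nonempty}, {i : ι2 | i.1 = V} := by
      intro i hi
      exact mem_biUnion hi rfl
    refine Set.Finite.subset ?_ hsub
    apply hT.biUnion
    intro V _
    haveI : Finite {p : ↥B × Bool // p ∈ σV V ∧ p.2 = true} :=
      Set.Finite.to_subtype ((σV V).finite_toSet.subset (fun p hp => hp.1))
    have hsub2 : {i : ι2 | i.1 = V} ⊆ Sigma.mk V '' univ := by
      rintro ⟨W', p⟩ h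
      have hWV : W' = V := h
      subst hWV
      exact ⟨p, trivial, rfl⟩
    exact (Set.finite_univ.image (Sigma.mk V)).subset hsub2
  have hflf : LocallyFinite f := by
    intro z
    obtain ⟨N, hN, hfin⟩ := h𝒱lf z.1
    refine ⟨N ×ˢ univ, prod_mem_nhds hN Filter.univ_mem, ?_⟩
    have hT : {V : ↥𝒱 | ((V : Set X) ∩ N).Nonempty}.Finite := by
      apply Set.Finite.of_finite_image (f := Subtype.val) ?_ Subtype.val_injective.injOn
      apply hfin.subset
      rintro _ ⟨⟨V, hV⟩, hVN, rfl⟩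
      exact ⟨hV, hVN⟩
    apply (hfin2 N hT).subset
    rintro i ⟨⟨a, c⟩, hfa, hNa⟩
    exact ⟨a, hvsub i.1 hfa.1, hNa.1⟩
  set UG : Set (X × Y) := ⋃ i, f i with hUGdef
  have hGU : G ⊆ UG := by
    rintro ⟨x, y⟩ hxy
    have hx : x ∈ ⋃ i, v i := hvU ▸ mem_univ x
    obtain ⟨V, hxV⟩ := mem_iUnion.mp hx
    have hxW : x ∈ W (σV V) := hVW V (hvsub V hxV)
    have hy : y ∈ ⋃ p ∈ σV V, (↑p.1 : Set Y) := (hσS V) ▸ mem_univ y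
    obtain ⟨p, hp, hyp⟩ := mem_iUnion₂.mp hy
    rcases hb : p.2 with _ | _
    · exfalso
      have hxD : x ∈ D (↑p.1) p.2 := mem_iInter₂.mp hxW p hp
      rw [hb] at hxD
      exact hxD y (subset_closure hyp) hxy
    · exact mem_iUnion.mpr ⟨⟨V, ⟨p, hp, hb⟩⟩, ⟨hxV, hyp⟩⟩
  have hFU : ∀ z ∈ F, z ∉ closure UG := by
    rintro ⟨x, y⟩ hzF hz
    rw [hflf.closure_iUnion] at hz
    obtain ⟨i, hi⟩ := mem_iUnion.mp hz
    have hi' : (x, y) ∈ closure (v i.1) ×ˢ closure (↑(i.2.1.1) : Set Y) := by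
      rwa [← closure_prod_eq]
    have hxV : x ∈ (i.1 : Set X) := hvcl i.1 hi'.1
    have hxW : x ∈ W (σV i.1) := hVW i.1 hxV
    have hxD : x ∈ D (↑(i.2.1.1)) (i.2.1.2) := mem_iInter₂.mp hxW i.2.1 i.2.2.1
    rw [i.2.2.2] at hxD
    exact hxD y hi'.2 hzF
  refine ⟨(closure UG)ᶜ, UG, isClosed_closure.isOpen_compl,
    isOpen_iUnion (fun i => (hvo i.1).prod (hB.isOpen i.2.1.1.2)),
    fun z hz => hFU z hz, hGU, disjoint_compl_left.mono_right subset_closure⟩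
end

section
/- Let τ be an infinite cardinal (viewed as an ordinal with the order topology) and X a topological space such that the product X × (τ+1) is normal, where τ+1 carries the order topology. Then X is τ-paracompact: every open cover of X of cardinality at most τ has a locally finite open refinement. -/
universe u

open Set Topology

namespace Stmt17

noncomputable section

variable {X : Type u} [TopologicalSpace X]

/-- The ordinal segment `[0, δ]` as a topological space. -/
abbrev Sp (δ : Ordinal.{u}) : Type (u + 1) := ↥(Set.Iic δ)

def top (δ : Ordinal.{u}) : Sp δ := ⟨δ, Set.mem_Iic.mpr le_rfl⟩

instance (δ : Ordinal.{u}) : CompactSpace (Sp δ) := by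
  rw [← isCompact_iff_compactSpace, ← Set.Icc_bot]
  exact isCompact_Icc

theorem normal_restrict {δ₁ δ₂ : Ordinal.{u}} (h : δ₁ ≤ δ₂)
    (hn : NormalSpace (X × Sp δ₂)) : NormalSpace (X × Sp δ₁) := by
  have hsub : Set.Iic δ₁ ⊆ Set.Iic δ₂ := Set.Iic_subset_Iic.mpr h
  have he : Topology.IsClosedEmbedding (Set.inclusion hsub) := by
    refine ⟨Topology.IsEmbedding.inclusion _, ?_⟩
    rw [Set.range_inclusion]
    exact isClosed_Iic.preimage continuous_subtype_val
  have hpe : Topology.IsClosedEmbedding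
      (Prod.map (id : X → X) (Set.inclusion hsub)) := by
    refine ⟨Topology.IsEmbedding.id.prodMap he.toIsEmbedding, ?_⟩
    rw [Set.range_prodMap]
    rw [Set.range_id]
    exact isClosed_univ.prod he.isClosed_range
  exact hpe.normalSpace

theorem normal_base {δ : Ordinal.{u}} (hn : NormalSpace (X × Sp δ)) :
    NormalSpace X := by
  have he : Topology.IsClosedEmbedding (fun x : X => (x, top δ)) := by
    refine Topology.IsClosedEmbedding.of_continuous_injective_isClosedMap
      (continuous_id.prodMk continuous_const) (fun a b hab => congrArg Prod.fst hab) ?_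
    intro C hC
    have : (fun x : X => (x, top δ)) '' C = C ×ˢ ({top δ} : Set (Sp δ)) := by
      ext p; constructor
      · rintro ⟨x, hx, rfl⟩; exact ⟨hx, rfl⟩
      · rintro ⟨hx, h2⟩; exact ⟨p.1, hx, by rw [← h2]⟩
    rw [this]
    exact hC.prod isClosed_singleton
  exact he.normalSpace

/-- The Urysohn-type data for an increasing open cover `W` along `[0,δ)`. -/
structure Gadget (X : Type u) [TopologicalSpace X] (δ : Ordinal.{u})
    (W : Ordinal → Set X) where
  F : X × Sp δ → ℝ
  cont : Continuous F
  top_eq : ∀ x : X, F (x, top δ) = 1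
  zero : ∀ (x : X) (γ : Sp δ), (γ : Ordinal) < δ → x ∉ W γ → F (x, γ) = 0

theorem exists_gadget {δ : Ordinal.{u}} {W : Ordinal → Set X}
    (hn : NormalSpace (X × Sp δ))
    (hWo : ∀ α : Ordinal, IsOpen (W α))
    (hWmono : ∀ ⦃α β : Ordinal⦄, α ≤ β → β < δ → W α ⊆ W β)
    (hWcov : ∀ x : X, ∃ α < δ, x ∈ W α) :
    Nonempty (Gadget X δ W) := by
  classical
  haveI := hn
  set H : Set (X × Sp δ) := {p | (p.2 : Ordinal) < δ ∧ p.1 ∉ W p.2} with hH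
  set T : Set (X × Sp δ) := {p | p.2 = top δ} with hT
  have hTclosed : IsClosed T := isClosed_singleton.preimage continuous_snd
  have hdisj : Disjoint (closure H) T := by
    rw [Set.disjoint_left]
    rintro ⟨x, γ⟩ hcl hmemT
    have hγ : γ = top δ := hmemT
    obtain ⟨α₀, hα₀δ, hxα₀⟩ := hWcov x
    have hnhds : (W α₀ ×ˢ {γ' : Sp δ | α₀ < (γ' : Ordinal)}) ∈ 𝓝 ((x, γ) : X × Sp δ) := by
      have hop : IsOpen (W α₀ ×ˢ {γ' : Sp δ | α₀ < (γ' : Ordinal)}) :=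
        (hWo α₀).prod (isOpen_Ioi.preimage continuous_subtype_val)
      refine hop.mem_nhds ⟨hxα₀, ?_⟩
      show α₀ < (γ : Ordinal)
      rw [hγ]; exact hα₀δ
    have := mem_closure_iff_nhds.mp hcl _ hnhds
    obtain ⟨⟨x', γ'⟩, ⟨hx', hγ'⟩, hmemH⟩ := this
    exact hmemH.2 (hWmono hγ'.le hmemH.1 hx')
  obtain ⟨f, hf0, hf1, _⟩ :=
    exists_continuous_zero_one_of_isClosed isClosed_closure hTclosed hdisj
  refine ⟨⟨f, f.continuous, ?_, ?_⟩⟩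
  · intro x; exact hf1 rfl
  · intro x γ h1 h2
    exact hf0 (subset_closure (by exact ⟨h1, h2⟩))

variable {δ : Ordinal.{u}} {W : Ordinal → Set X}

/-- `Mt g t α`: points whose fiber function exceeds `t` on the whole tail `[α, δ]`. -/
def Mt (g : Gadget X δ W) (t : ℝ) (α : Ordinal) : Set X :=
  {x | ∀ γ : Sp δ, α ≤ (γ : Ordinal) → t < g.F (x, γ)}

/-- Closed variant with `≤`. -/
def Ct (g : Gadget X δ W) (t : ℝ) (α : Ordinal) : Set X :=
  {x | ∀ γ : Sp δ, α ≤ (γ : Ordinal) → t ≤ g.F (x, γ)}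

variable {g : Gadget X δ W}

theorem Mt_mono {t : ℝ} {α β : Ordinal} (h : α ≤ β) : Mt g t α ⊆ Mt g t β :=
  fun _x hx γ hγ => hx γ (h.trans hγ)

theorem Ct_mono {t : ℝ} {α β : Ordinal} (h : α ≤ β) : Ct g t α ⊆ Ct g t β :=
  fun _x hx γ hγ => hx γ (h.trans hγ)

theorem Mt_subset_Ct {t : ℝ} {α : Ordinal} : Mt g t α ⊆ Ct g t α :=
  fun _x hx γ hγ => (hx γ hγ).le

theorem Ct_subset_Mt {s t : ℝ} (hst : s < t) {α : Ordinal} : Ct g t α ⊆ Mt g s α :=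
  fun _x hx γ hγ => lt_of_lt_of_le hst (hx γ hγ)

theorem Mt_anti {s t : ℝ} (hst : s ≤ t) {α : Ordinal} : Mt g t α ⊆ Mt g s α :=
  fun _x hx γ hγ => lt_of_le_of_lt hst (hx γ hγ)

theorem fiber_continuous (g : Gadget X δ W) (x : X) :
    Continuous (fun γ : Sp δ => g.F (x, γ)) :=
  g.cont.comp (continuous_const.prodMk continuous_id)

theorem isClosed_Ct {t : ℝ} {α : Ordinal} : IsClosed (Ct g t α) := by
  have : Ct g t α = ⋂ γ : Sp δ, {x | α ≤ (γ : Ordinal) → t ≤ g.F (x, γ)} := by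
    ext x; simp [Ct, Set.mem_iInter]
  rw [this]
  refine isClosed_iInter fun γ => ?_
  by_cases h : α ≤ (γ : Ordinal)
  · have : {x : X | α ≤ (γ : Ordinal) → t ≤ g.F (x, γ)} = {x | t ≤ g.F (x, γ)} := by
      ext x; simp [h]
    rw [this]
    exact isClosed_Ici.preimage (g.cont.comp (continuous_id.prodMk continuous_const))
  · have : {x : X | α ≤ (γ : Ordinal) → t ≤ g.F (x, γ)} = Set.univ := by
      ext x; simp [h]
    rw [this]; exact isClosed_univ

theorem isOpen_Mt {t : ℝ} {α : Ordinal} : IsOpen (Mt g t α) := by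
  rw [isOpen_iff_forall_mem_open]
  intro x hx
  have hK : IsCompact {γ : Sp δ | α ≤ (γ : Ordinal)} :=
    ((isClosed_Ici.preimage continuous_subtype_val).isCompact)
  have hsub : ({x} : Set X) ×ˢ {γ : Sp δ | α ≤ (γ : Ordinal)} ⊆ g.F ⁻¹' Set.Ioi t := by
    rintro ⟨x', γ⟩ ⟨hx', hγ⟩
    rcases hx' with rfl
    exact hx γ hγ
  obtain ⟨u, v, hu, _, hxu, hKv, huv⟩ :=
    generalized_tube_lemma isCompact_singleton hK
      (isOpen_Ioi.preimage g.cont) hsub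
  refine ⟨u, ?_, hu, hxu rfl⟩
  intro y hy γ hγ
  exact huv ⟨hy, hKv hγ⟩

theorem Mt_subset_W {t : ℝ} (ht : 0 < t) {α : Ordinal} (hα : α < δ) :
    Mt g t α ⊆ W α := by
  intro x hx
  by_contra hxW
  have := g.zero x ⟨α, hα.le⟩ hα hxW
  have h2 := hx ⟨α, hα.le⟩ le_rfl
  rw [this] at h2
  exact absurd h2 (not_lt.mpr ht.le)

/-- From continuity at a point `λ ≤ δ` of the fiber: openness data. -/
theorem exists_lt_forall_Ioo {x : X} {t : ℝ} {lam : Ordinal} (hlam : lam ≤ δ)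
    (hlim : Order.IsSuccLimit lam) (hval : t < g.F (x, ⟨lam, hlam⟩)) :
    ∃ a < lam, ∀ γ : Sp δ, a < (γ : Ordinal) → (γ : Ordinal) < lam → t < g.F (x, γ) := by
  have hcont := fiber_continuous g x
  have hopen : IsOpen ((fun γ : Sp δ => g.F (x, γ)) ⁻¹' Set.Ioi t) :=
    isOpen_Ioi.preimage hcont
  rw [isOpen_induced_iff] at hopen
  obtain ⟨O, hO, hOeq⟩ := hopen
  have hmem : lam ∈ O := by
    have : (⟨lam, hlam⟩ : Sp δ) ∈ (fun γ : Sp δ => g.F (x, γ)) ⁻¹' Set.Ioi t := hval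
    rw [← hOeq] at this; exact this
  obtain ⟨a, halam, hIoo⟩ := (Ordinal.isOpen_iff.mp hO) lam hmem hlim
  refine ⟨a, halam, fun γ h1 h2 => ?_⟩
  have : (γ : Ordinal) ∈ O := hIoo ⟨h1, h2⟩
  have : γ ∈ Subtype.val ⁻¹' O := this
  rw [hOeq] at this
  exact this

/-- Existence of a settling index below a limit `δ`. -/
theorem exists_mem_Mt (hδ : Order.IsSuccLimit δ) {t : ℝ} (ht : t < 1) (x : X) :
    ∃ α < δ, x ∈ Mt g t α := by
  have hval : t < g.F (x, top δ) := by rw [g.top_eq x]; exact ht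
  obtain ⟨a, haδ, hIoo⟩ := exists_lt_forall_Ioo (g := g) le_rfl hδ hval
  refine ⟨Order.succ a, hδ.succ_lt haδ, fun γ hγ => ?_⟩
  rcases eq_or_lt_of_le (Set.mem_Iic.mp γ.2) with h | h
  · have : γ = top δ := Subtype.ext h
    rw [this, g.top_eq x]; exact ht
  · exact hIoo γ (lt_of_lt_of_le (Order.lt_succ a) hγ) h

/-- The settling ordinal. -/
def stl (g : Gadget X δ W) (t : ℝ) (x : X) : Ordinal :=
  sInf {α | x ∈ Mt g t α}

theorem stl_mem (hδ : Order.IsSuccLimit δ) {t : ℝ} (ht : t < 1) (x : X) :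
    x ∈ Mt g t (stl g t x) := by
  have hne : {α | x ∈ Mt g t α}.Nonempty := by
    obtain ⟨α, _, hα⟩ := exists_mem_Mt (g := g) hδ ht x; exact ⟨α, hα⟩
  exact csInf_mem hne

theorem stl_le {t : ℝ} {x : X} {β : Ordinal} (h : x ∈ Mt g t β) : stl g t x ≤ β :=
  csInf_le (OrderBot.bddBelow _) h

theorem stl_lt (hδ : Order.IsSuccLimit δ) {t : ℝ} (ht : t < 1) (x : X) :
    stl g t x < δ := by
  obtain ⟨α, hαδ, hα⟩ := exists_mem_Mt (g := g) hδ ht x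
  exact lt_of_le_of_lt (stl_le hα) hαδ

theorem not_mem_of_lt_stl {t : ℝ} {x : X} {β : Ordinal} (h : β < stl g t x) :
    x ∉ Mt g t β := fun hx => absurd (stl_le hx) (not_le.mpr h)

theorem stl_mono {s t : ℝ} (hst : s ≤ t) (hδ : Order.IsSuccLimit δ) (ht : t < 1) (x : X) :
    stl g s x ≤ stl g t x :=
  stl_le (Mt_anti hst (stl_mem hδ ht x))

/-- The settling ordinal is zero or a successor. -/
theorem stl_zero_or_succ (hδ : Order.IsSuccLimit δ) {t : ℝ} (ht : t < 1) (x : X) :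
    stl g t x = 0 ∨ ∃ β, stl g t x = Order.succ β := by
  rcases Ordinal.zero_or_succ_or_isSuccLimit (stl g t x) with h | ⟨a, ha⟩ | hlim
  · exact Or.inl h
  · exact Or.inr ⟨a, ha.symm⟩
  · exfalso
    have hlt : stl g t x < δ := stl_lt hδ ht x
    have hmem : x ∈ Mt g t (stl g t x) := stl_mem hδ ht x
    have hval : t < g.F (x, ⟨stl g t x, hlt.le⟩) := hmem _ le_rfl
    obtain ⟨a, halam, hIoo⟩ := exists_lt_forall_Ioo (g := g) hlt.le hlim hval
    have : x ∈ Mt g t (Order.succ a) := by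
      intro γ hγ
      rcases lt_or_ge (γ : Ordinal) (stl g t x) with h | h
      · exact hIoo γ (lt_of_lt_of_le (Order.lt_succ a) hγ) h
      · exact hmem γ h
    exact absurd (stl_le this) (not_le.mpr (hlim.succ_lt halam))

/-- If `stl = succ β` then the value at `β` is at most `t`. -/
theorem stl_succ_val (hδ : Order.IsSuccLimit δ) {t : ℝ} (ht : t < 1) {x : X} {β : Ordinal}
    (h : stl g t x = Order.succ β) :
    β < δ ∧ ∀ hβ : β ≤ δ, g.F (x, ⟨β, hβ⟩) ≤ t := by
  have hβδ : β < δ := lt_of_lt_of_le (Order.lt_succ β) (h ▸ (stl_lt hδ ht x)).le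
  refine ⟨hβδ, fun hβ => ?_⟩
  have hnot : x ∉ Mt g t β := not_mem_of_lt_stl (h ▸ Order.lt_succ β)
  rw [Mt, Set.mem_setOf_eq] at hnot
  push_neg at hnot
  obtain ⟨γ, hγβ, hγval⟩ := hnot
  have hmem : x ∈ Mt g t (Order.succ β) := h ▸ stl_mem hδ ht x
  rcases eq_or_lt_of_le hγβ with heq | hlt
  · have : γ = (⟨β, hβ⟩ : Sp δ) := Subtype.ext heq.symm
    rwa [← this]
  · exact absurd (hmem γ (Order.succ_le_of_lt hlt)) (not_lt.mpr hγval)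


/-- The basic pieces of the σ-locally-finite refinement. -/
def Gset (g : Gadget X δ W) (p q : ℝ) (α : Ordinal) : Set X :=
  if α < δ then Mt g q α \ closure (⋃ β < α, Mt g p β) else ∅

theorem isOpen_Gset {p q : ℝ} {α : Ordinal} : IsOpen (Gset g p q α) := by
  unfold Gset
  split
  · exact isOpen_Mt.sdiff isClosed_closure
  · exact isOpen_empty

theorem Gset_empty {p q : ℝ} {α : Ordinal} (h : ¬ α < δ) : Gset g p q α = ∅ := by
  unfold Gset; rw [if_neg h]

theorem Gset_subset_Mt {p q : ℝ} {α : Ordinal} : Gset g p q α ⊆ Mt g q α := by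
  unfold Gset; split
  · exact Set.diff_subset
  · exact Set.empty_subset _

theorem Gset_subset_W {p q : ℝ} (hq : 0 < q) {α : Ordinal} : Gset g p q α ⊆ W α := by
  by_cases h : α < δ
  · exact Gset_subset_Mt.trans (Mt_subset_W hq h)
  · rw [Gset_empty h]; exact Set.empty_subset _

theorem mem_Gset_elim {p q : ℝ} {α : Ordinal} {y : X} (h : y ∈ Gset g p q α) :
    α < δ ∧ y ∈ Mt g q α ∧ y ∉ closure (⋃ β < α, Mt g p β) := by
  unfold Gset at h
  split at h
  · exact ⟨by assumption, h.1, h.2⟩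
  · exact absurd h (Set.notMem_empty y)

/-- Local finiteness: each of the families `{Gset p q α}_α` is locally finite. -/
theorem locfin_Gset (hδ : Order.IsSuccLimit δ) {p q : ℝ} (hpq : p < q) (hp1 : p < 1)
    (x₀ : X) :
    ∃ N ∈ 𝓝 x₀, {α : Ordinal | (Gset g p q α ∩ N).Nonempty}.Finite := by
  classical
  by_cases hE : ∃ γ : Sp δ, g.F (x₀, γ) ≤ p
  · -- the set of fiber points with value ≤ p is nonempty; take its greatest element
    set E' : Set (Sp δ) := {γ | g.F (x₀, γ) ≤ p} with hE'
    have hE'closed : IsClosed E' :=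
      isClosed_Iic.preimage (g.cont.comp (continuous_const.prodMk continuous_id))
    have hEcomp : IsCompact (Subtype.val '' E') :=
      (hE'closed.isCompact).image continuous_subtype_val
    have hEne : (Subtype.val '' E').Nonempty := by
      obtain ⟨γ, hγ⟩ := hE; exact ⟨γ, ⟨γ, hγ, rfl⟩⟩
    obtain ⟨m, hmE, hub⟩ := hEcomp.exists_isGreatest hEne
    obtain ⟨γm, hγm, hγmval⟩ := hmE
    have hmδ : m ≤ δ := hγmval ▸ (Set.mem_Iic.mp γm.2)
    have hFm : g.F (x₀, ⟨m, hmδ⟩) ≤ p := by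
      have : (⟨m, hmδ⟩ : Sp δ) = γm := Subtype.ext hγmval.symm
      rw [this]; exact hγm
    -- tube above m
    have hK : IsCompact {γ : Sp δ | Order.succ m ≤ (γ : Ordinal)} :=
      (isClosed_Ici.preimage continuous_subtype_val).isCompact
    have hsub : ({x₀} : Set X) ×ˢ {γ : Sp δ | Order.succ m ≤ (γ : Ordinal)} ⊆
        g.F ⁻¹' Set.Ioi p := by
      rintro ⟨x', γ⟩ ⟨hx', hγ⟩
      have hx'eq : x' = x₀ := hx'
      show p < g.F (x', γ)
      rw [hx'eq]
      by_contra hcon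
      have hval : g.F (x₀, γ) ≤ p := not_lt.mp hcon
      have hmem' : (γ : Ordinal) ∈ Subtype.val '' E' := ⟨γ, hval, rfl⟩
      exact absurd (hub hmem') (not_le.mpr (lt_of_lt_of_le (Order.lt_succ m) hγ))
    obtain ⟨N₁, v, hN₁o, _, hxN₁, hKv, huv⟩ :=
      generalized_tube_lemma isCompact_singleton hK (isOpen_Ioi.preimage g.cont) hsub
    have hN₁Mt : N₁ ⊆ Mt g p (Order.succ m) := by
      intro y hy γ hγ
      exact huv ⟨hy, hKv hγ⟩
    -- box around (x₀, m)
    have hbox : ((x₀, ⟨m, hmδ⟩) : X × Sp δ) ∈ g.F ⁻¹' Set.Iio q := lt_of_le_of_lt hFm hpq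
    obtain ⟨N₂, v₂, hN₂o, _, hxN₂, hmv₂, huv₂⟩ :=
      isOpen_prod_iff.mp (isOpen_Iio.preimage g.cont) x₀ ⟨m, hmδ⟩ hbox
    refine ⟨N₁ ∩ N₂, Filter.inter_mem (hN₁o.mem_nhds (hxN₁ rfl)) (hN₂o.mem_nhds hxN₂), ?_⟩
    refine Set.Finite.subset (Set.finite_singleton (Order.succ m)) ?_
    rintro α ⟨y, hyG, hyN₁, hyN₂⟩
    obtain ⟨hαδ, hyM, hyc⟩ := mem_Gset_elim hyG
    have hle : α ≤ Order.succ m := by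
      by_contra hcon
      push_neg at hcon
      exact hyc (subset_closure (Set.mem_biUnion hcon (hN₁Mt hyN₁)))
    have hge : Order.succ m ≤ α := by
      rw [Order.succ_le_iff]
      by_contra hcon
      push_neg at hcon
      have h1 : q < g.F (y, ⟨m, hmδ⟩) := hyM ⟨m, hmδ⟩ hcon
      have h2 : g.F (y, ⟨m, hmδ⟩) < q := huv₂ (Set.mk_mem_prod hyN₂ hmv₂)
      exact absurd h1 (not_lt.mpr h2.le)
    exact le_antisymm hle hge
  · -- all fiber values exceed p : a single tube suffices
    push_neg at hE
    have hsub : ({x₀} : Set X) ×ˢ (Set.univ : Set (Sp δ)) ⊆ g.F ⁻¹' Set.Ioi p := by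
      rintro ⟨x', γ⟩ ⟨hx', -⟩
      rcases hx' with rfl
      exact hE γ
    obtain ⟨N₁, v, hN₁o, _, hxN₁, hKv, huv⟩ :=
      generalized_tube_lemma isCompact_singleton isCompact_univ
        (isOpen_Ioi.preimage g.cont) hsub
    have hN₁Mt : N₁ ⊆ Mt g p 0 := by
      intro y hy γ _
      exact huv ⟨hy, hKv (Set.mem_univ γ)⟩
    refine ⟨N₁, hN₁o.mem_nhds (hxN₁ rfl), Set.Finite.subset (Set.finite_singleton 0) ?_⟩
    rintro α ⟨y, hyG, hyN₁⟩
    obtain ⟨hαδ, hyM, hyc⟩ := mem_Gset_elim hyG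
    by_contra hne
    have hpos : 0 < α := pos_iff_ne_zero.mpr hne
    exact hyc (subset_closure (Set.mem_biUnion hpos (hN₁Mt hyN₁)))

/-- Covering: the union over rational pairs of the `Gset` families covers `X`. -/
theorem cover_Gset (hδ : Order.IsSuccLimit δ) (x : X) :
    ∃ p q : ℚ, 0 < p ∧ p < q ∧ q < 1 ∧ ∃ α < δ, x ∈ Gset g p q α := by
  classical
  by_contra hcon
  push_neg at hcon
  -- first, each settling ordinal is a successor `succ β_q` with value exactly `q` at `β_q`
  have key : ∀ q : ℚ, 0 < q → q < 1 →
      ∃ β, stl g (q : ℝ) x = Order.succ β ∧ β < δ ∧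
        ∀ hβ : β ≤ δ, g.F (x, ⟨β, hβ⟩) = (q : ℝ) := by
    intro q hq0 hq1
    have hq1' : (q : ℝ) < 1 := by exact_mod_cast hq1
    have hstl_mem : x ∈ Mt g (q : ℝ) (stl g (q : ℝ) x) := stl_mem hδ hq1' x
    have hstl_lt : stl g (q : ℝ) x < δ := stl_lt hδ hq1' x
    have hnG : ∀ p : ℚ, 0 < p → p < q →
        x ∈ closure (⋃ β < stl g (q : ℝ) x, Mt g (p : ℝ) β) := by
      intro p hp0 hpq
      have := hcon p q hp0 hpq hq1 (stl g (q : ℝ) x) hstl_lt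
      unfold Gset at this
      rw [if_pos hstl_lt] at this
      by_contra hcl
      exact this ⟨hstl_mem, hcl⟩
    rcases stl_zero_or_succ hδ hq1' x with h0 | ⟨β, hβ⟩
    · exfalso
      have := hnG (q / 2) (by positivity) (by linarith)
      rw [h0] at this
      simp only [not_lt_zero'] at this
      simp at this
    · obtain ⟨hβδ, hβval⟩ := stl_succ_val hδ hq1' hβ
      refine ⟨β, hβ, hβδ, fun hβle => ?_⟩
      have hlower : ∀ p : ℚ, 0 < p → p < q → (p : ℝ) ≤ g.F (x, ⟨β, hβle⟩) := by
        intro p hp0 hpq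
        have hx_cl := hnG p hp0 hpq
        rw [hβ] at hx_cl
        have hsub2 : (⋃ β' < Order.succ β, Mt g (p : ℝ) β') ⊆ Mt g (p : ℝ) β := by
          refine Set.iUnion₂_subset fun β' hβ' => Mt_mono (Order.lt_succ_iff.mp hβ')
        have : x ∈ Ct g (p : ℝ) β :=
          (closure_minimal (hsub2.trans Mt_subset_Ct) isClosed_Ct) hx_cl
        exact this ⟨β, hβle⟩ le_rfl
      have hupper : g.F (x, ⟨β, hβle⟩) ≤ (q : ℝ) := hβval hβle
      refine le_antisymm hupper ?_
      by_contra hlt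
      push_neg at hlt
      have h0F : (0 : ℝ) < (q : ℝ) := by exact_mod_cast hq0
      have hmaxlt : max (0 : ℝ) (g.F (x, ⟨β, hβle⟩)) < (q : ℝ) := max_lt h0F hlt
      obtain ⟨p, hp1, hp2⟩ := exists_rat_btwn hmaxlt
      have hp0 : (0 : ℚ) < p := by
        have : (0 : ℝ) < (p : ℝ) := lt_of_le_of_lt (le_max_left _ _) hp1
        exact_mod_cast this
      have hpq : p < q := by exact_mod_cast hp2
      have := hlower p hp0 hpq
      exact absurd this (not_le.mpr (lt_of_le_of_lt (le_max_right _ _) hp1))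
  -- now extract a strictly decreasing sequence of ordinals
  set Q : ℕ → ℚ := fun n => 1 / (n + 2) with hQ
  have hq0 : ∀ n : ℕ, (0 : ℚ) < Q n := by intro n; rw [hQ]; positivity
  have hq1 : ∀ n : ℕ, Q n < 1 := by
    intro n
    rw [hQ]
    simp only []
    rw [div_lt_one (by positivity)]
    have : (0 : ℚ) ≤ (n : ℚ) := Nat.cast_nonneg n
    linarith
  have hQanti : ∀ n : ℕ, Q (n + 1) < Q n := by
    intro n
    rw [hQ]
    simp only []
    rw [div_lt_div_iff₀ (by positivity) (by positivity)]
    have : (0 : ℚ) ≤ (n : ℚ) := Nat.cast_nonneg n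
    push_cast
    linarith
  choose B hB1 hB2 hB3 using fun n : ℕ => key (Q n) (hq0 n) (hq1 n)
  have hanti : ∀ n : ℕ, B (n + 1) < B n := by
    intro n
    have hle : stl g ((Q (n + 1) : ℚ) : ℝ) x ≤ stl g ((Q n : ℚ) : ℝ) x := by
      refine stl_mono ?_ hδ ?_ x
      · exact_mod_cast (hQanti n).le
      · exact_mod_cast hq1 n
    rw [hB1 n, hB1 (n + 1)] at hle
    have hBle : B (n + 1) ≤ B n := Order.succ_le_succ_iff.mp hle
    rcases lt_or_eq_of_le hBle with h | h
    · exact h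
    · exfalso
      have e2 := hB3 n ((hB2 n).le)
      have e1' : g.F (x, ⟨B n, (hB2 n).le⟩) = ((Q (n + 1) : ℚ) : ℝ) := by
        have e1 := hB3 (n + 1) ((hB2 (n + 1)).le)
        convert e1 using 3
        exact Subtype.ext h.symm
      have heq : ((Q (n + 1) : ℚ) : ℝ) = ((Q n : ℚ) : ℝ) := e1'.symm.trans e2
      have : Q (n + 1) = Q n := by exact_mod_cast heq
      exact absurd this (ne_of_lt (hQanti n))
  obtain ⟨b, ⟨n, rfl⟩, hmin⟩ := wellFounded_lt.has_min (Set.range B) ⟨B 0, 0, rfl⟩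
  exact hmin (B (n + 1)) ⟨n + 1, rfl⟩ (hanti n)


/-- Theorem B: a locally finite open refinement of an increasing open cover
indexed along a limit ordinal `δ`, assuming normality of `X × [0, δ]`. -/
theorem exists_locfin_refinement {δ : Ordinal.{u}} (hδ : Order.IsSuccLimit δ)
    (hn : NormalSpace (X × Sp δ)) {W : Ordinal.{u} → Set X}
    (hWo : ∀ α, IsOpen (W α))
    (hWmono : ∀ ⦃α β : Ordinal.{u}⦄, α ≤ β → β < δ → W α ⊆ W β)
    (hWcov : ∀ x : X, ∃ α < δ, x ∈ W α) :
    ∃ V : ℕ → Ordinal.{u} → Set X,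
      (∀ n α, IsOpen (V n α)) ∧
      (∀ n α, V n α ⊆ W α) ∧
      (∀ n α, δ ≤ α → V n α = ∅) ∧
      (∀ x : X, ∃ n α, x ∈ V n α) ∧
      (∀ x : X, ∃ N ∈ 𝓝 x, {p : ℕ × Ordinal.{u} | (V p.1 p.2 ∩ N).Nonempty}.Finite) := by
  classical
  obtain ⟨g⟩ := exists_gadget hn hWo hWmono hWcov
  -- enumerate the rational pairs
  set e : ℕ → ℚ × ℚ := fun n => (Denumerable.eqv (ℚ × ℚ)).symm n with he_def
  have he : ∀ pq : ℚ × ℚ, ∃ n, e n = pq := fun pq =>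
    ⟨Denumerable.eqv (ℚ × ℚ) pq, by simp [he_def]⟩
  set good : ℕ → Prop := fun n => 0 < (e n).1 ∧ (e n).1 < (e n).2 ∧ (e n).2 < 1 with hgood
  set piece : ℕ → Ordinal.{u} → Set X := fun n α =>
    if good n then Gset g ((e n).1 : ℝ) ((e n).2 : ℝ) α else ∅ with hpiece
  have hpiece_open : ∀ n α, IsOpen (piece n α) := by
    intro n α; rw [hpiece]; dsimp only; split
    · exact isOpen_Gset
    · exact isOpen_empty
  have hpiece_W : ∀ n α, piece n α ⊆ W α := by
    intro n α; rw [hpiece]; dsimp only; split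
    · rename_i hg
      refine Gset_subset_W ?_
      have h1 : (0 : ℚ) < (e n).2 := lt_trans hg.1 hg.2.1
      exact_mod_cast h1
    · exact Set.empty_subset _
  have hpiece_empty : ∀ n α, δ ≤ α → piece n α = ∅ := by
    intro n α hα; rw [hpiece]; dsimp only; split
    · exact Gset_empty (not_lt.mpr hα)
    · rfl
  have hpiece_cov : ∀ x : X, ∃ n α, x ∈ piece n α := by
    intro x
    obtain ⟨p, q, hp0, hpq, hq1, α, hαδ, hx⟩ := cover_Gset (g := g) hδ x
    obtain ⟨n, hn_eq⟩ := he (p, q)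
    refine ⟨n, α, ?_⟩
    rw [hpiece]; dsimp only
    rw [if_pos (show good n by rw [hgood]; dsimp only; rw [hn_eq]; exact ⟨hp0, hpq, hq1⟩)]
    rw [hn_eq]
    exact hx
  -- the countable increasing cover by levels
  set Hn : ℕ → Set X := fun n => ⋃ m ≤ n, ⋃ α, piece m α with hHn
  have hHn_open : ∀ n, IsOpen (Hn n) := fun n =>
    isOpen_biUnion fun m _ => isOpen_iUnion fun α => hpiece_open m α
  have hHn_mono : ∀ {m n : ℕ}, m ≤ n → Hn m ⊆ Hn n := by
    intro m n hmn x hx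
    rw [hHn] at hx ⊢
    simp only [Set.mem_iUnion] at hx ⊢
    obtain ⟨k, hk, α, hα⟩ := hx
    exact ⟨k, hk.trans hmn, α, hα⟩
  -- the ω-indexed version
  set W₂ : Ordinal.{u} → Set X := fun β => ⋃ (n : ℕ) (_ : (n : Ordinal.{u}) ≤ β), Hn n
    with hW₂
  have hW₂o : ∀ β, IsOpen (W₂ β) := fun β => isOpen_biUnion fun n _ => hHn_open n
  have hW₂mono : ∀ ⦃α β : Ordinal.{u}⦄, α ≤ β → β < Ordinal.omega0 → W₂ α ⊆ W₂ β := by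
    intro α β hab _ x hx
    rw [hW₂] at hx ⊢
    simp only [Set.mem_iUnion] at hx ⊢
    obtain ⟨n, hn, hxn⟩ := hx
    exact ⟨n, hn.trans hab, hxn⟩
  have hW₂cov : ∀ x : X, ∃ β < Ordinal.omega0, x ∈ W₂ β := by
    intro x
    obtain ⟨n, α, hx⟩ := hpiece_cov x
    refine ⟨(n : Ordinal), Ordinal.nat_lt_omega0 n, ?_⟩
    rw [hW₂]; dsimp only
    simp only [Set.mem_iUnion]
    have hxH : x ∈ Hn n := by
      rw [hHn]; simp only [Set.mem_iUnion]; exact ⟨n, le_rfl, α, hx⟩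
    exact ⟨n, le_rfl, hxH⟩
  have hnω : NormalSpace (X × Sp Ordinal.omega0) :=
    normal_restrict (Ordinal.omega0_le_of_isSuccLimit hδ) hn
  obtain ⟨g₂⟩ := exists_gadget hnω hW₂o hW₂mono hW₂cov
  set Cn : ℕ → Set X := fun n => Ct g₂ (1 / 2) (n : Ordinal.{u}) with hCn
  set Mn : ℕ → Set X := fun n => Mt g₂ (1 / 2) (n : Ordinal.{u}) with hMn
  have hMn_sub_Cn : ∀ n, Mn n ⊆ Cn n := fun n => Mt_subset_Ct
  have hCn_closed : ∀ n, IsClosed (Cn n) := fun n => isClosed_Ct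
  have hMn_open : ∀ n, IsOpen (Mn n) := fun n => isOpen_Mt
  have hCn_sub_Hn : ∀ n, Cn n ⊆ Hn n := by
    intro n x hx
    have hlt : ((n : Ordinal.{u})) < Ordinal.omega0 := Ordinal.nat_lt_omega0 n
    have hval : (1 / 2 : ℝ) ≤ g₂.F (x, ⟨(n : Ordinal), hlt.le⟩) := hx _ le_rfl
    have hxW₂ : x ∈ W₂ (n : Ordinal) := by
      by_contra hxc
      rw [g₂.zero x ⟨(n : Ordinal), hlt.le⟩ hlt hxc] at hval
      norm_num at hval
    rw [hW₂] at hxW₂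
    simp only [Set.mem_iUnion] at hxW₂
    obtain ⟨m, hm, hxm⟩ := hxW₂
    exact hHn_mono (by exact_mod_cast hm) hxm
  have hMn_cov : ∀ x : X, ∃ n, x ∈ Mn n := by
    intro x
    obtain ⟨α, hαω, hx⟩ := exists_mem_Mt (g := g₂) Ordinal.isSuccLimit_omega0
      (by norm_num : (1 / 2 : ℝ) < 1) x
    obtain ⟨n, rfl⟩ := Ordinal.lt_omega0.mp hαω
    exact ⟨n, hx⟩
  -- the final family
  refine ⟨fun n α => piece n α \ ⋃ m ∈ {m : ℕ | m < n}, Cn m, ?_, ?_, ?_, ?_, ?_⟩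
  · intro n α
    exact (hpiece_open n α).sdiff
      (Set.Finite.isClosed_biUnion (Set.finite_Iio n) fun m _ => hCn_closed m)
  · intro n α
    exact Set.diff_subset.trans (hpiece_W n α)
  · intro n α hα
    show piece n α \ ⋃ m ∈ {m : ℕ | m < n}, Cn m = ∅
    rw [hpiece_empty n α hα, Set.empty_diff]
  · -- covering
    intro x
    have hex : ∃ n, ∃ α, x ∈ piece n α := hpiece_cov x
    obtain ⟨α, hα⟩ := Nat.find_spec hex
    refine ⟨Nat.find hex, α, hα, ?_⟩
    intro hmem
    simp only [Set.mem_iUnion] at hmem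
    obtain ⟨m, hm, hxm⟩ := hmem
    have hxH : x ∈ Hn m := hCn_sub_Hn m hxm
    rw [hHn] at hxH
    simp only [Set.mem_iUnion] at hxH
    obtain ⟨k, hk, α', hxk⟩ := hxH
    exact Nat.find_min hex (lt_of_le_of_lt hk hm) ⟨α', hxk⟩
  · -- local finiteness
    intro x
    obtain ⟨n₀, hxn₀⟩ := hMn_cov x
    have hper : ∀ n : ℕ, ∃ N ∈ 𝓝 x, {α : Ordinal.{u} | (piece n α ∩ N).Nonempty}.Finite := by
      intro n
      by_cases hg : good n
      · obtain ⟨N, hN, hfin⟩ := locfin_Gset (g := g) hδ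
          (show ((e n).1 : ℝ) < ((e n).2 : ℝ) by exact_mod_cast hg.2.1)
          (show ((e n).1 : ℝ) < 1 by exact_mod_cast lt_trans hg.2.1 hg.2.2) x
        refine ⟨N, hN, hfin.subset ?_⟩
        intro α hα
        have h2 : ((if good n then Gset g ((e n).1 : ℝ) ((e n).2 : ℝ) α else ∅) ∩ N).Nonempty := by
          rw [hpiece] at hα; exact hα
        rw [if_pos hg] at h2
        exact h2
      · refine ⟨Set.univ, Filter.univ_mem, ?_⟩
        have : {α : Ordinal.{u} | (piece n α ∩ Set.univ).Nonempty} = ∅ := by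
          ext α
          simp only [Set.mem_setOf_eq, Set.mem_empty_iff_false, iff_false]
          rintro ⟨y, hy, -⟩
          have hy2 : y ∈ (if good n then Gset g ((e n).1 : ℝ) ((e n).2 : ℝ) α else ∅) := by
            rw [hpiece] at hy; exact hy
          rw [if_neg hg] at hy2
          exact hy2
        rw [this]; exact Set.finite_empty
    choose NN hNN hfinN using hper
    refine ⟨Mn n₀ ∩ ⋂ m ∈ {m : ℕ | m ≤ n₀}, NN m,
      Filter.inter_mem ((hMn_open n₀).mem_nhds hxn₀)
        ((Filter.biInter_mem (Set.finite_Iic n₀)).mpr fun m _ => hNN m), ?_⟩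
    have hbig : {p : ℕ × Ordinal.{u} |
        ((piece p.1 p.2 \ ⋃ m ∈ {m : ℕ | m < p.1}, Cn m) ∩
          (Mn n₀ ∩ ⋂ m ∈ {m : ℕ | m ≤ n₀}, NN m)).Nonempty} ⊆
        ⋃ n ∈ {n : ℕ | n ≤ n₀}, ({n} : Set ℕ) ×ˢ
          {α : Ordinal.{u} | (piece n α ∩ NN n).Nonempty} := by
      rintro ⟨n, α⟩ ⟨y, ⟨hyV, hyc⟩, hyM, hyN⟩
      have hn_le : n ≤ n₀ := by
        by_contra hcon
        push_neg at hcon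
        exact hyc (Set.mem_biUnion hcon (hMn_sub_Cn n₀ hyM))
      have hyNN : y ∈ NN n := by
        simp only [Set.mem_iInter] at hyN
        exact hyN n hn_le
      exact Set.mem_biUnion hn_le ⟨rfl, ⟨y, hyV, hyNN⟩⟩
    refine Set.Finite.subset ?_ hbig
    exact Set.Finite.biUnion (Set.finite_Iic n₀) fun n _ =>
      (Set.finite_singleton n).prod (hfinN n)

end
end Stmt17

namespace Stmt17
noncomputable section

theorem exists_enum {Y : Type u} {κ : Cardinal.{u}} {𝒰 : Set (Set Y)}
    (hcard : Cardinal.mk 𝒰 ≤ κ) :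
    ∃ uu : Ordinal.{u} → Set Y, (∀ α, uu α ∈ 𝒰 ∨ uu α = ∅) ∧
      ∀ T ∈ 𝒰, ∃ α < κ.ord, uu α = T := by
  classical
  have hemb : Nonempty (↥𝒰 ↪ ↥(Set.Iio κ.ord)) := by
    rw [← Cardinal.lift_mk_le']
    rw [Ordinal.mk_Iio_ordinal, Cardinal.card_ord, Cardinal.lift_lift]
    exact Cardinal.lift_le.mpr hcard
  obtain ⟨j⟩ := hemb
  refine ⟨fun α => ⋃₀ {T : Set Y | ∃ h : T ∈ 𝒰, ((j ⟨T, h⟩ : ↥(Set.Iio κ.ord)) : Ordinal) = α},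
    ?_, ?_⟩
  · intro α
    by_cases hne : {T : Set Y | ∃ h : T ∈ 𝒰, ((j ⟨T, h⟩ : ↥(Set.Iio κ.ord)) : Ordinal) = α}.Nonempty
    · obtain ⟨T, hT, hjT⟩ := hne
      left
      have hset : {T' : Set Y | ∃ h : T' ∈ 𝒰, ((j ⟨T', h⟩ : ↥(Set.Iio κ.ord)) : Ordinal) = α}
          = {T} := by
        apply Set.eq_singleton_iff_unique_mem.mpr
        refine ⟨⟨hT, hjT⟩, ?_⟩
        rintro T' ⟨hT', hjT'⟩
        have : j ⟨T', hT'⟩ = j ⟨T, hT⟩ := Subtype.ext (hjT'.trans hjT.symm)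
        have := j.injective this
        exact congrArg Subtype.val this
      show ⋃₀ {T : Set Y | ∃ h : T ∈ 𝒰, ((j ⟨T, h⟩ : ↥(Set.Iio κ.ord)) : Ordinal) = α} ∈ 𝒰
      rw [hset, Set.sUnion_singleton]
      exact hT
    · right
      show ⋃₀ {T : Set Y | ∃ h : T ∈ 𝒰, ((j ⟨T, h⟩ : ↥(Set.Iio κ.ord)) : Ordinal) = α} = ∅
      rw [Set.not_nonempty_iff_eq_empty.mp hne, Set.sUnion_empty]
  · intro T hT
    refine ⟨(j ⟨T, hT⟩ : ↥(Set.Iio κ.ord)), (j ⟨T, hT⟩).2, ?_⟩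
    have hset : {T' : Set Y | ∃ h : T' ∈ 𝒰,
        ((j ⟨T', h⟩ : ↥(Set.Iio κ.ord)) : Ordinal) = ((j ⟨T, hT⟩ : ↥(Set.Iio κ.ord)) : Ordinal)}
        = {T} := by
      apply Set.eq_singleton_iff_unique_mem.mpr
      refine ⟨⟨hT, rfl⟩, ?_⟩
      rintro T' ⟨hT', hjT'⟩
      have : j ⟨T', hT'⟩ = j ⟨T, hT⟩ := Subtype.ext hjT'
      exact congrArg Subtype.val (j.injective this)
    show ⋃₀ {T' : Set Y | ∃ h : T' ∈ 𝒰, ((j ⟨T', h⟩ : ↥(Set.Iio κ.ord)) : Ordinal)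
        = ((j ⟨T, hT⟩ : ↥(Set.Iio κ.ord)) : Ordinal)} = T
    rw [hset, Set.sUnion_singleton]


theorem main : ∀ κ : Cardinal.{u}, ∀ {Y : Type u} [instY : TopologicalSpace Y],
    Cardinal.aleph0 ≤ κ → NormalSpace (Y × Sp κ.ord) → TauParacompact Y κ := by
  intro κ
  induction κ using WellFoundedLT.induction with
  | ind κ IH =>
  intro Y instY hκ hnorm 𝒰 h𝒰o h𝒰cov h𝒰card
  classical
  haveI hYnorm : NormalSpace Y := normal_base hnorm
  have hδ : Order.IsSuccLimit (Cardinal.ord κ) := Cardinal.isSuccLimit_ord hκ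
  obtain ⟨uu, hu_mem, hu_surj⟩ := exists_enum h𝒰card
  have hu_open : ∀ α, IsOpen (uu α) := fun α =>
    (hu_mem α).elim (fun h => h𝒰o _ h) (fun h => h ▸ isOpen_empty)
  set W : Ordinal.{u} → Set Y := fun α => ⋃ (β : Ordinal.{u}) (_ : β ≤ α), uu β with hW
  have hWo : ∀ α, IsOpen (W α) := fun α => isOpen_iUnion fun β => isOpen_iUnion fun _ => hu_open β
  have hWmono : ∀ ⦃α β : Ordinal.{u}⦄, α ≤ β → β < κ.ord → W α ⊆ W β := by
    intro α β hab _ x hx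
    rw [hW] at hx ⊢
    simp only [Set.mem_iUnion] at hx ⊢
    obtain ⟨γ, hγ, hxγ⟩ := hx
    exact ⟨γ, hγ.trans hab, hxγ⟩
  have hWcov : ∀ x : Y, ∃ α < κ.ord, x ∈ W α := by
    intro x
    have hx : x ∈ ⋃₀ 𝒰 := h𝒰cov ▸ Set.mem_univ x
    obtain ⟨T, hT, hxT⟩ := hx
    obtain ⟨α, hακ, hαT⟩ := hu_surj T hT
    refine ⟨α, hακ, ?_⟩
    rw [hW]
    simp only [Set.mem_iUnion]
    exact ⟨α, le_rfl, hαT ▸ hxT⟩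
  obtain ⟨V, hVo, hVW, hVempty, hVcov, hVlf⟩ :=
    exists_locfin_refinement hδ hnorm hWo hWmono hWcov
  -- shrink the cover
  have hpf : ∀ x ∈ (Set.univ : Set Y), {i : ℕ × Ordinal.{u} | x ∈ V i.1 i.2}.Finite := by
    intro x _
    obtain ⟨N, hN, hfin⟩ := hVlf x
    refine hfin.subset ?_
    rintro ⟨n, α⟩ hx
    exact ⟨x, hx, mem_of_mem_nhds hN⟩
  have hcov' : (Set.univ : Set Y) ⊆ ⋃ i : ℕ × Ordinal.{u}, V i.1 i.2 := by
    intro x _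
    obtain ⟨n, α, h⟩ := hVcov x
    exact Set.mem_iUnion.mpr ⟨(n, α), h⟩
  obtain ⟨v, hv_cov, hv_open, hv_cl⟩ :=
    exists_subset_iUnion_closure_subset isClosed_univ
      (fun i : ℕ × Ordinal.{u} => hVo i.1 i.2) hpf hcov'
  -- refine each piece inside single members of 𝒰
  have key : ∀ i : ℕ × Ordinal.{u}, ∃ 𝒟 : Set (Set Y),
      (∀ D ∈ 𝒟, IsOpen D) ∧ ⋃₀ 𝒟 = Set.univ ∧
      (∀ D ∈ 𝒟, (∃ T ∈ 𝒰, D ⊆ T) ∨ Disjoint D (closure (v i))) ∧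
      (∀ x : Y, ∃ N ∈ 𝓝 x, {D ∈ 𝒟 | (D ∩ N).Nonempty}.Finite) := by
    rintro ⟨n, α⟩
    by_cases hαδ : α < κ.ord
    swap
    · -- the piece is empty
      have hVe : V n α = ∅ := hVempty n α (not_lt.mp hαδ)
      have hve : closure (v (n, α)) = ∅ := by
        have h1 : v (n, α) ⊆ (∅ : Set Y) := (subset_closure.trans (hv_cl (n, α))).trans
          (by rw [hVe])
        rw [Set.subset_empty_iff.mp h1, closure_empty]
      refine ⟨{Set.univ}, ?_, ?_, ?_, ?_⟩
      · rintro D rfl; exact isOpen_univ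
      · rw [Set.sUnion_singleton]
      · rintro D rfl
        right
        rw [hve]
        exact Set.disjoint_empty _
      · intro x
        exact ⟨Set.univ, Filter.univ_mem,
          (Set.finite_singleton Set.univ).subset (Set.sep_subset _ _)⟩
    · -- main case
      set E := closure (v (n, α)) with hE
      set R : Set (Set Y) := {s | ∃ β ≤ α, s = uu β} with hR
      set 𝒞 : Set (Set Y) := insert Eᶜ R with h𝒞
      have hEV : E ⊆ V n α := hv_cl (n, α)
      have h𝒞o : ∀ C ∈ 𝒞, IsOpen C := by
        rintro C hC
        rcases Set.mem_insert_iff.mp hC with rfl | hCR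
        · exact isClosed_closure.isOpen_compl
        · obtain ⟨β, _, rfl⟩ := hCR
          exact hu_open β
      have h𝒞cov : ⋃₀ 𝒞 = Set.univ := by
        apply Set.eq_univ_of_forall
        intro x
        by_cases hx : x ∈ E
        · have hxW : x ∈ W α := hVW n α (hEV hx)
          rw [hW] at hxW
          simp only [Set.mem_iUnion] at hxW
          obtain ⟨β, hβα, hxβ⟩ := hxW
          exact ⟨uu β, Set.mem_insert_iff.mpr (Or.inr ⟨β, hβα, rfl⟩), hxβ⟩
        · exact ⟨Eᶜ, Set.mem_insert _ _, hx⟩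
      have hcond : ∀ D C, C ∈ 𝒞 → D ⊆ C → (∃ T ∈ 𝒰, D ⊆ T) ∨ Disjoint D E := by
        intro D C hC hDC
        rcases Set.mem_insert_iff.mp hC with rfl | hCR
        · exact Or.inr (Set.disjoint_left.mpr fun y hy => hDC hy)
        · obtain ⟨β, _, rfl⟩ := hCR
          rcases hu_mem β with hmem | hempty
          · exact Or.inl ⟨uu β, hmem, hDC⟩
          · refine Or.inr (Set.disjoint_left.mpr fun y hy => ?_)
            rw [hempty] at hDC
            exact absurd (hDC hy) (Set.notMem_empty y)
      by_cases hfin : α < Ordinal.omega0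
      · -- finite subcover : use 𝒞 itself
        have hIic : (Set.Iic α).Finite := by
          obtain ⟨n', rfl⟩ := Ordinal.lt_omega0.mp hfin
          refine ((Set.finite_Iic n').image (fun m : ℕ => (m : Ordinal.{u}))).subset ?_
          intro β hβ
          have hβω : β < Ordinal.omega0 :=
            lt_of_le_of_lt hβ (Ordinal.nat_lt_omega0 n')
          obtain ⟨m, rfl⟩ := Ordinal.lt_omega0.mp hβω
          refine ⟨m, ?_, rfl⟩
          have : (m : Ordinal.{u}) ≤ (n' : Ordinal.{u}) := hβ
          exact_mod_cast this
        have hRfin : R.Finite := by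
          have : R = uu '' Set.Iic α := by
            ext s
            constructor
            · rintro ⟨β, hβ, rfl⟩; exact ⟨β, hβ, rfl⟩
            · rintro ⟨β, hβ, rfl⟩; exact ⟨β, hβ, rfl⟩
          rw [this]
          exact hIic.image uu
        have h𝒞fin : 𝒞.Finite := hRfin.insert _
        refine ⟨𝒞, h𝒞o, h𝒞cov, ?_, ?_⟩
        · intro D hD
          exact hcond D D hD subset_rfl
        · intro x
          exact ⟨Set.univ, Filter.univ_mem, h𝒞fin.subset (Set.sep_subset _ _)⟩
      · -- infinite: use the induction hypothesis
        have hωα : Ordinal.omega0 ≤ α := not_lt.mp hfin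
        set lam := (Order.succ α).card with hlam
        have hlam_inf : Cardinal.aleph0 ≤ lam :=
          Ordinal.aleph0_le_card.mpr (hωα.trans (Order.le_succ α))
        have hlam_lt : lam < κ := Cardinal.lt_ord.mp (hδ.succ_lt hαδ)
        have hnorm' : NormalSpace (Y × Sp lam.ord) :=
          normal_restrict (Cardinal.ord_le_ord.mpr hlam_lt.le) hnorm
        have hTP : TauParacompact Y lam := IH lam hlam_lt hlam_inf hnorm'
        have hRcard : Cardinal.mk ↥R ≤ lam := by
          have hReq : R = Set.range (fun β : ↥(Set.Iic α) => uu ↑β) := by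
            ext s
            constructor
            · rintro ⟨β, hβ, rfl⟩; exact ⟨⟨β, hβ⟩, rfl⟩
            · rintro ⟨⟨β, hβ⟩, rfl⟩; exact ⟨β, hβ, rfl⟩
          rw [hReq]
          have h1 := Cardinal.mk_range_le_lift (f := fun β : ↥(Set.Iic α) => uu ↑β)
          have h2 : Cardinal.mk ↥(Set.Iic α) ≤ Cardinal.lift.{u + 1} lam := by
            have hsub : (Set.Iic α) ⊆ Set.Iio (Order.succ α) := fun β hβ =>
              Set.mem_Iio.mpr (Order.lt_succ_iff.mpr (Set.mem_Iic.mp hβ))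
            calc Cardinal.mk ↥(Set.Iic α) ≤ Cardinal.mk ↥(Set.Iio (Order.succ α)) :=
                Cardinal.mk_le_mk_of_subset hsub
              _ = Cardinal.lift.{u + 1} (Order.succ α).card := Ordinal.mk_Iio_ordinal _
          have h3 := h1.trans (Cardinal.lift_le.mpr h2)
          rw [Cardinal.lift_lift] at h3
          exact Cardinal.lift_le.mp h3
        have h𝒞card : Cardinal.mk ↥𝒞 ≤ lam := by
          calc Cardinal.mk ↥𝒞 ≤ Cardinal.mk ↥R + 1 := Cardinal.mk_insert_le
            _ ≤ lam + 1 := add_le_add_left hRcard 1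
            _ = lam := Cardinal.add_one_eq hlam_inf
        obtain ⟨𝒟, h1, h2, h3, h4⟩ := hTP 𝒞 h𝒞o h𝒞cov h𝒞card
        refine ⟨𝒟, h1, h2, ?_, h4⟩
        intro D hD
        obtain ⟨C, hC, hDC⟩ := h3 D hD
        exact hcond D C hC hDC
  choose 𝒟 h𝒟o h𝒟cov h𝒟cond h𝒟lf using key
  -- the final refinement
  refine ⟨{S | ∃ (i : ℕ × Ordinal.{u}) (D : Set Y), D ∈ 𝒟 i ∧ (∃ T ∈ 𝒰, D ⊆ T) ∧
    S = D ∩ V i.1 i.2}, ?_, ?_, ?_, ?_⟩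
  · rintro S ⟨i, D, hD, -, rfl⟩
    exact (h𝒟o i D hD).inter (hVo i.1 i.2)
  · apply Set.eq_univ_of_forall
    intro x
    have hxv : ∃ i, x ∈ v i := Set.mem_iUnion.mp (hv_cov (Set.mem_univ x))
    obtain ⟨i, hxv⟩ := hxv
    have hxD : x ∈ ⋃₀ 𝒟 i := by rw [h𝒟cov i]; exact Set.mem_univ x
    obtain ⟨D, hD, hxD⟩ := hxD
    rcases h𝒟cond i D hD with hkept | hdis
    · refine ⟨D ∩ V i.1 i.2, ⟨i, D, hD, hkept, rfl⟩, hxD, ?_⟩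
      exact hv_cl i (subset_closure hxv)
    · exact absurd (subset_closure hxv) (fun hc => Set.disjoint_left.mp hdis hxD hc)
  · rintro S ⟨i, D, hD, ⟨T, hT, hDT⟩, rfl⟩
    exact ⟨T, hT, Set.inter_subset_left.trans hDT⟩
  · intro x
    obtain ⟨N₀, hN₀, hfin₀⟩ := hVlf x
    choose NN hNN ffin using fun i : ℕ × Ordinal.{u} => h𝒟lf i x
    refine ⟨N₀ ∩ ⋂ i ∈ {i : ℕ × Ordinal.{u} | (V i.1 i.2 ∩ N₀).Nonempty}, NN i,
      Filter.inter_mem hN₀ ((Filter.biInter_mem hfin₀).mpr fun i _ => hNN i), ?_⟩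
    refine Set.Finite.subset
      (hfin₀.biUnion (fun i _ => ((ffin i).image (fun D => D ∩ V i.1 i.2)))) ?_
    rintro S ⟨⟨i, D, hD, hkept, rfl⟩, hSN⟩
    obtain ⟨y, ⟨hyD, hyV⟩, hyN₀, hyInter⟩ := hSN
    have hiP : i ∈ {i : ℕ × Ordinal.{u} | (V i.1 i.2 ∩ N₀).Nonempty} := ⟨y, hyV, hyN₀⟩
    have hyNN : y ∈ NN i := by
      simp only [Set.mem_iInter] at hyInter
      exact hyInter i hiP
    exact Set.mem_biUnion hiP ⟨D, ⟨hD, ⟨y, hyD, hyNN⟩⟩, rfl⟩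

end
end Stmt17

/-- If `X × (τ+1)` is normal, where `τ+1` is the ordinal space of all ordinals
`≤ τ` (for an infinite cardinal `τ`, identified with its initial ordinal), then
`X` is `τ`-paracompact. -/
theorem stmt_17 {X : Type u} [TopologicalSpace X] [T2Space X]
    (τ : Cardinal.{u}) (hτ : Cardinal.aleph0 ≤ τ)
    (hnorm : NormalSpace (X × (Set.Iic τ.ord : Set Ordinal.{u}))) :
    TauParacompact X τ :=
  Stmt17.main τ hτ hnorm
end
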